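/- arXiv:2504.20936 — 10 statements merged into one kernel-verified Lean document; each statement's English description precedes it below -/
import Mathlib

section
/- Let (P,∗,∘) be a pre-Poisson algebra over a field K. Define x·y := x∗y + y∗x and {x,y} := x∘y − y∘x. Then (P,·,{·,·}) is a Poisson algebra: · is commutative and associative, {·,·} is alternating and satisfies the Jacobi identity, and the Leibniz rule {x, y·z} = {x,y}·z + y·{x,z} holds for all x,y,z ∈ P. -/
/-- The sub-adjacent operations of a pre-Poisson algebra form a
Poisson algebra. -/
theorem subadjacent_poisson_of_prePoisson
    {K : Type*} [Field K] {P : Type*} [AddCommGroup P] [Module K P]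
    (mul cir : P →ₗ[K] P →ₗ[K] P)
    (hZin : ∀ x y z : P, mul x (mul y z) = mul (mul x y + mul y x) z)
    (hPre : ∀ x y z : P,
      cir (cir x y) z - cir x (cir y z) = cir (cir y x) z - cir y (cir x z))
    (hC1 : ∀ x y z : P,
      mul (cir x y - cir y x) z = cir x (mul y z) - mul y (cir x z))
    (hC2 : ∀ x y z : P,
      cir (mul x y + mul y x) z = mul x (cir y z) + mul y (cir x z)) :
    ∀ d b : P → P → P,
      (∀ x y : P, d x y = mul x y + mul y x) →
      (∀ x y : P, b x y = cir x y - cir y x) →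
      (∀ x y : P, d x y = d y x) ∧
      (∀ x y z : P, d (d x y) z = d x (d y z)) ∧
      (∀ x : P, b x x = 0) ∧
      (∀ x y z : P, b x (b y z) + b y (b z x) + b z (b x y) = 0) ∧
      (∀ x y z : P, b x (d y z) = d (b x y) z + d y (b x z)) := by
  intro d b hd hb
  simp only [map_add, map_sub, LinearMap.add_apply, LinearMap.sub_apply] at hZin hPre hC1 hC2
  -- auxiliary: left operations commute
  have hA : ∀ x y z : P, mul x (mul y z) = mul y (mul x z) := by
    intro x y z
    rw [hZin x y z, hZin y x z, add_comm]
  refine ⟨?_, ?_, ?_, ?_, ?_⟩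
  · intro x y
    rw [hd, hd]; abel
  · intro x y z
    simp only [hd, map_add, LinearMap.add_apply]
    linear_combination (norm := abel) (- hZin x y z) + hZin y z x +
      hA z x y + hA z y x
  · intro x
    rw [hb x x, sub_self]
  · intro x y z
    simp only [hb, map_sub, LinearMap.sub_apply]
    linear_combination (norm := abel) (- hPre x y z) - hPre y z x - hPre z x y
  · intro x y z
    simp only [hb, hd, map_add, map_sub, LinearMap.add_apply, LinearMap.sub_apply]
    linear_combination (norm := abel) (- hC1 x y z) - hC1 x z y - hC2 y z x
end

section
/- Let (P,·,{·,·}) be a Poisson algebra over a field K and let B: P → P be a linear map satisfying B(x)·B(y) = B(B(x)·y + x·B(y)) and {B(x),B(y)} = B({B(x),y} + {x,B(y)}) for all x,y ∈ P (a Rota-Baxter operator of weight zero). Define x∗y := B(x)·y and x∘y := {B(x),y}. Then (P,∗,∘) is a pre-Poisson algebra, and B is a homomorphism from its sub-adjacent Poisson algebra to (P,·,{·,·}): B(x∗y + y∗x) = B(x)·B(y) and B(x∘y − y∘x) = {B(x),B(y)} for all x,y ∈ P. -/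
/-- A Rota-Baxter operator of weight zero on a Poisson algebra
induces a pre-Poisson algebra, and `B` is a homomorphism from the sub-adjacent
Poisson algebra to the original one. -/
theorem prePoisson_of_rotaBaxter_weight_zero
    {K : Type*} [Field K] {P : Type*} [AddCommGroup P] [Module K P]
    (pmul pbr : P →ₗ[K] P →ₗ[K] P)
    (hcomm : ∀ x y : P, pmul x y = pmul y x)
    (hassoc : ∀ x y z : P, pmul (pmul x y) z = pmul x (pmul y z))
    (halt : ∀ x : P, pbr x x = 0)
    (hjac : ∀ x y z : P, pbr x (pbr y z) + pbr y (pbr z x) + pbr z (pbr x y) = 0)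
    (hleib : ∀ x y z : P, pbr x (pmul y z) = pmul (pbr x y) z + pmul y (pbr x z))
    (B : P →ₗ[K] P)
    (hB1 : ∀ x y : P, pmul (B x) (B y) = B (pmul (B x) y + pmul x (B y)))
    (hB2 : ∀ x y : P, pbr (B x) (B y) = B (pbr (B x) y + pbr x (B y))) :
    ∀ s c : P → P → P,
      (∀ x y : P, s x y = pmul (B x) y) →
      (∀ x y : P, c x y = pbr (B x) y) →
      (∀ x y z : P, s x (s y z) = s (s x y + s y x) z) ∧
      (∀ x y z : P, c (c x y) z - c x (c y z) = c (c y x) z - c y (c x z)) ∧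
      (∀ x y z : P, s (c x y - c y x) z = c x (s y z) - s y (c x z)) ∧
      (∀ x y z : P, c (s x y + s y x) z = s x (c y z) + s y (c x z)) ∧
      (∀ x y : P, B (s x y + s y x) = pmul (B x) (B y)) ∧
      (∀ x y : P, B (c x y - c y x) = pbr (B x) (B y)) := by
  intro s c hs hc
  have hskew : ∀ x y : P, pbr x y = - pbr y x := by
    intro x y
    have h := halt (x + y)
    simp only [map_add, LinearMap.add_apply, halt, zero_add, add_zero] at h
    exact eq_neg_of_add_eq_zero_right h
  have pbr_sub : ∀ a b z : P, pbr a z - pbr b z = pbr (a - b) z := by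
    intro a b z; simp
  have pbr_add : ∀ a b z : P, pbr a z + pbr b z = pbr (a + b) z := by
    intro a b z; simp
  have pmul_sub : ∀ a b z : P, pmul a z - pmul b z = pmul (a - b) z := by
    intro a b z; simp
  have pmul_add : ∀ a b z : P, pmul a z + pmul b z = pmul (a + b) z := by
    intro a b z; simp
  have keyS : ∀ x y : P, B (s x y + s y x) = pmul (B x) (B y) := by
    intro x y
    rw [hs, hs, hB1, hcomm (B y) x]
  have keyC : ∀ x y : P, B (c x y - c y x) = pbr (B x) (B y) := by
    intro x y
    rw [hc, hc, hB2, hskew (B y) x, sub_neg_eq_add]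
  refine ⟨?_, ?_, ?_, ?_, keyS, keyC⟩
  · intro x y z
    rw [hs x, hs y, hs _ z, keyS x y, hassoc]
  · intro x y z
    have h2 : c (c x y) z - c (c y x) z = pbr (pbr (B x) (B y)) z := by
      rw [hc (c x y) z, hc (c y x) z, pbr_sub, ← map_sub, ← keyC x y, map_sub]
    have hj := hjac (B x) (B y) z
    rw [hskew z (B x), map_neg, hskew z (pbr (B x) (B y))] at hj
    have hj' : -(pbr (B x) (pbr (B y) z) + -pbr (B y) (pbr (B x) z)
        + -pbr (pbr (B x) (B y)) z) = 0 := by rw [hj, neg_zero]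
    rw [hc x (c y z), hc y (c x z), hc y z, hc x z, ← sub_eq_zero,
       show c (c x y) z - pbr (B x) (pbr (B y) z) - (c (c y x) z - pbr (B y) (pbr (B x) z))
         = (c (c x y) z - c (c y x) z)
           - (pbr (B x) (pbr (B y) z) - pbr (B y) (pbr (B x) z)) from by abel,
       h2, ← hj']
    abel
  · intro x y z
    have hL : s (c x y - c y x) z = pmul (pbr (B x) (B y)) z := by
      rw [hs, keyC x y]
    rw [hL, hc x (s y z), hs y z, hs y (c x z), hc x z, hleib (B x) (B y) z,
        hcomm (pbr (B x) (B y)) z]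
    abel
  · intro x y z
    have hL : c (s x y + s y x) z = pbr (pmul (B x) (B y)) z := by
      rw [hc, keyS x y]
    rw [hL, hs x (c y z), hc y z, hs y (c x z), hc x z]
    have h := hleib z (B x) (B y)
    rw [hskew z (pmul (B x) (B y)), hskew z (B x), hskew z (B y), map_neg] at h
    -- h : - pbr (pmul Bx By) z = pmul (- pbr Bx z) By + pmul Bx (- pbr By z)
    have h' : pbr (pmul (B x) (B y)) z
        = pmul (pbr (B x) z) (B y) + pmul (B x) (pbr (B y) z) := by
      simp only [LinearMap.neg_apply, map_neg] at h
      rw [← neg_add] at h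
      exact neg_inj.mp h
    rw [h', hcomm (pbr (B x) z) (B y)]
    abel
end

section
/- Let (V;ρ,μ,θ,γ) be a representation of a pre-Poisson algebra (P,∗,∘) over a field K, with V finite-dimensional. Define linear maps ρ',μ',θ',γ': P → End(V*) by (ρ'(x)ξ)(v) = ξ(ρ(x)v + μ(x)v), (μ'(x)ξ)(v) = −ξ(μ(x)v), (θ'(x)ξ)(v) = −ξ(θ(x)v − γ(x)v), and (γ'(x)ξ)(v) = ξ(γ(x)v), for x ∈ P, ξ ∈ V*, v ∈ V. Then (V*; ρ', μ', θ', γ') is a representation of (P,∗,∘). -/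
/-- The dual of a representation of a pre-Poisson algebra is again
a representation. -/
theorem dual_representation_of_prePoisson
    {K : Type*} [Field K] {P : Type*} [AddCommGroup P] [Module K P]
    {V : Type*} [AddCommGroup V] [Module K V] [FiniteDimensional K V]
    (mul cir : P →ₗ[K] P →ₗ[K] P)
    (hZin : ∀ x y z : P, mul x (mul y z) = mul (mul x y + mul y x) z)
    (hPre : ∀ x y z : P,
      cir (cir x y) z - cir x (cir y z) = cir (cir y x) z - cir y (cir x z))
    (hC1 : ∀ x y z : P,
      mul (cir x y - cir y x) z = cir x (mul y z) - mul y (cir x z))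
    (hC2 : ∀ x y z : P,
      cir (mul x y + mul y x) z = mul x (cir y z) + mul y (cir x z))
    (ρ μ θ γ : P →ₗ[K] V →ₗ[K] V)
    (h1 : ∀ (x y : P) (v : V), ρ x (ρ y v) = ρ (mul x y) v + ρ (mul y x) v)
    (h2 : ∀ (x y : P) (v : V), ρ x (μ y v) = μ (mul x y) v)
    (h3 : ∀ (x y : P) (v : V), μ (mul x y) v = μ y (ρ x v) + μ y (μ x v))
    (h4 : ∀ (x y : P) (v : V),
      θ (cir x y - cir y x) v = θ x (θ y v) - θ y (θ x v))
    (h5 : ∀ (x y : P) (v : V),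
      θ x (γ y v) - γ y (θ x v) = γ (cir x y) v - γ y (γ x v))
    (h6 : ∀ (x y : P) (v : V),
      ρ (cir x y - cir y x) v = θ x (ρ y v) - ρ y (θ x v))
    (h7 : ∀ (x y : P) (v : V),
      μ (cir x y) v = μ y (γ x v) - μ y (θ x v) + θ x (μ y v))
    (h8 : ∀ (x y : P) (v : V),
      μ (cir x y) v = γ y (ρ x v) + γ y (μ x v) - ρ x (γ y v))
    (h9 : ∀ (x y : P) (v : V),
      θ (mul x y + mul y x) v = ρ x (θ y v) + ρ y (θ x v))
    (h10 : ∀ (x y : P) (v : V),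
      γ (mul x y) v = ρ x (γ y v) + μ y (γ x v) - μ y (θ x v)) :
    ∀ ρ' μ' θ' γ' : P → Module.Dual K V → Module.Dual K V,
      (∀ (x : P) (ξ : Module.Dual K V) (v : V), ρ' x ξ v = ξ (ρ x v + μ x v)) →
      (∀ (x : P) (ξ : Module.Dual K V) (v : V), μ' x ξ v = - ξ (μ x v)) →
      (∀ (x : P) (ξ : Module.Dual K V) (v : V), θ' x ξ v = - ξ (θ x v - γ x v)) →
      (∀ (x : P) (ξ : Module.Dual K V) (v : V), γ' x ξ v = ξ (γ x v)) →
      (∀ (x y : P) (ξ : Module.Dual K V),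
        ρ' x (ρ' y ξ) = ρ' (mul x y) ξ + ρ' (mul y x) ξ) ∧
      (∀ (x y : P) (ξ : Module.Dual K V), ρ' x (μ' y ξ) = μ' (mul x y) ξ) ∧
      (∀ (x y : P) (ξ : Module.Dual K V),
        μ' (mul x y) ξ = μ' y (ρ' x ξ) + μ' y (μ' x ξ)) ∧
      (∀ (x y : P) (ξ : Module.Dual K V),
        θ' (cir x y - cir y x) ξ = θ' x (θ' y ξ) - θ' y (θ' x ξ)) ∧
      (∀ (x y : P) (ξ : Module.Dual K V),
        θ' x (γ' y ξ) - γ' y (θ' x ξ) = γ' (cir x y) ξ - γ' y (γ' x ξ)) ∧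
      (∀ (x y : P) (ξ : Module.Dual K V),
        ρ' (cir x y - cir y x) ξ = θ' x (ρ' y ξ) - ρ' y (θ' x ξ)) ∧
      (∀ (x y : P) (ξ : Module.Dual K V),
        μ' (cir x y) ξ = μ' y (γ' x ξ) - μ' y (θ' x ξ) + θ' x (μ' y ξ)) ∧
      (∀ (x y : P) (ξ : Module.Dual K V),
        μ' (cir x y) ξ = γ' y (ρ' x ξ) + γ' y (μ' x ξ) - ρ' x (γ' y ξ)) ∧
      (∀ (x y : P) (ξ : Module.Dual K V),
        θ' (mul x y + mul y x) ξ = ρ' x (θ' y ξ) + ρ' y (θ' x ξ)) ∧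
      (∀ (x y : P) (ξ : Module.Dual K V),
        γ' (mul x y) ξ = ρ' x (γ' y ξ) + μ' y (γ' x ξ) - μ' y (θ' x ξ)) := by
  intro ρ' μ' θ' γ' hρ' hμ' hθ' hγ'
  refine ⟨?_, ?_, ?_, ?_, ?_, ?_, ?_, ?_, ?_, ?_⟩ <;> intro x y ξ <;> ext v
  · have e1 := congrArg ξ (h1 y x v)
    have e2 := congrArg ξ (h2 y x v)
    have e3 := congrArg ξ (h3 x y v)
    simp only [map_add, map_sub, LinearMap.add_apply, LinearMap.sub_apply] at e1 e2 e3
    simp only [hρ', hμ', hθ', hγ', LinearMap.add_apply, LinearMap.sub_apply,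
      map_add, map_sub, map_neg]
    linear_combination e1 + e2 - e3
  · have e3 := congrArg ξ (h3 x y v)
    simp only [map_add, map_sub, LinearMap.add_apply, LinearMap.sub_apply] at e3
    simp only [hρ', hμ', hθ', hγ', LinearMap.add_apply, LinearMap.sub_apply,
      map_add, map_sub, map_neg]
    linear_combination e3
  · have e2 := congrArg ξ (h2 x y v)
    simp -failIfUnchanged only [map_add, map_sub, LinearMap.add_apply, LinearMap.sub_apply] at e2
    simp only [hρ', hμ', hθ', hγ', LinearMap.add_apply, LinearMap.sub_apply,
      map_add, map_sub, map_neg]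
    linear_combination e2
  · have e4 := congrArg ξ (h4 x y v)
    have e5 := congrArg ξ (h5 x y v)
    have e5' := congrArg ξ (h5 y x v)
    simp only [map_add, map_sub, LinearMap.add_apply, LinearMap.sub_apply] at e4 e5 e5'
    simp only [hρ', hμ', hθ', hγ', LinearMap.add_apply, LinearMap.sub_apply,
      map_add, map_sub, map_neg]
    linear_combination -e4 - e5 + e5'
  · have e5 := congrArg ξ (h5 x y v)
    simp only [map_add, map_sub, LinearMap.add_apply, LinearMap.sub_apply] at e5
    simp only [hρ', hμ', hθ', hγ', LinearMap.add_apply, LinearMap.sub_apply,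
      map_add, map_sub, map_neg]
    linear_combination e5
  · have e6 := congrArg ξ (h6 x y v)
    have e7 := congrArg ξ (h7 x y v)
    have e8 := congrArg ξ (h8 y x v)
    simp only [map_add, map_sub, LinearMap.add_apply, LinearMap.sub_apply] at e6 e7 e8
    simp only [hρ', hμ', hθ', hγ', LinearMap.add_apply, LinearMap.sub_apply,
      map_add, map_sub, map_neg]
    linear_combination e6 + e7 - e8
  · have e7 := congrArg ξ (h7 x y v)
    simp only [map_add, map_sub, LinearMap.add_apply, LinearMap.sub_apply] at e7
    simp only [hρ', hμ', hθ', hγ', LinearMap.add_apply, LinearMap.sub_apply,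
      map_add, map_sub, map_neg]
    linear_combination -e7
  · have e8 := congrArg ξ (h8 x y v)
    simp only [map_add, map_sub, LinearMap.add_apply, LinearMap.sub_apply] at e8
    simp only [hρ', hμ', hθ', hγ', LinearMap.add_apply, LinearMap.sub_apply,
      map_add, map_sub, map_neg]
    linear_combination -e8
  · have e9 := congrArg ξ (h9 x y v)
    have e10 := congrArg ξ (h10 x y v)
    have e10' := congrArg ξ (h10 y x v)
    have e7 := congrArg ξ (h7 x y v)
    have e7' := congrArg ξ (h7 y x v)
    have e8 := congrArg ξ (h8 x y v)
    have e8' := congrArg ξ (h8 y x v)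
    have e6 := congrArg ξ (h6 x y v)
    have e6' := congrArg ξ (h6 y x v)
    simp only [map_add, map_sub, LinearMap.add_apply, LinearMap.sub_apply] at e9 e10 e10' e7 e7' e8 e8' e6 e6'
    simp only [hρ', hμ', hθ', hγ', LinearMap.add_apply, LinearMap.sub_apply,
      map_add, map_sub, map_neg]
    linear_combination -e9 + e10 + e10' - e7 - e7' + e8 + e8' - e6 - e6'
  · have e10 := congrArg ξ (h10 x y v)
    have e7 := congrArg ξ (h7 x y v)
    have e8 := congrArg ξ (h8 x y v)
    simp only [map_add, map_sub, LinearMap.add_apply, LinearMap.sub_apply] at e10 e7 e8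
    simp only [hρ', hμ', hθ', hγ', LinearMap.add_apply, LinearMap.sub_apply,
      map_add, map_sub, map_neg]
    linear_combination e10 - e7 + e8
end

section
/- Let (P,·,{·,·}) be a Poisson algebra over a field K equipped with a symplectic structure ω, and suppose ∗ and ∘ are bilinear operations on P satisfying ω(x∗y, z) = ω(y, x·z) and ω(x∘y, z) = −ω(y, {x,z}) for all x,y,z ∈ P. Then (P,∗,∘) is a pre-Poisson algebra, and its sub-adjacent operations recover the original ones: x∗y + y∗x = x·y and x∘y − y∘x = {x,y} for all x,y ∈ P. -/
/-- A symplectic Poisson algebra induces a compatible pre-Poisson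
algebra structure. -/
theorem prePoisson_of_symplectic_poisson
    {K : Type*} [Field K] {P : Type*} [AddCommGroup P] [Module K P]
    (pmul pbr : P →ₗ[K] P →ₗ[K] P)
    (hcomm : ∀ x y : P, pmul x y = pmul y x)
    (hassoc : ∀ x y z : P, pmul (pmul x y) z = pmul x (pmul y z))
    (halt : ∀ x : P, pbr x x = 0)
    (hjac : ∀ x y z : P, pbr x (pbr y z) + pbr y (pbr z x) + pbr z (pbr x y) = 0)
    (hleib : ∀ x y z : P, pbr x (pmul y z) = pmul (pbr x y) z + pmul y (pbr x z))
    (ω : P →ₗ[K] P →ₗ[K] K)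
    (hωalt : ∀ x : P, ω x x = 0)
    (hωnd : ∀ x : P, (∀ y : P, ω x y = 0) → x = 0)
    (hωcyc1 : ∀ x y z : P, ω (pbr x y) z + ω (pbr y z) x + ω (pbr z x) y = 0)
    (hωcyc2 : ∀ x y z : P, ω (pmul x y) z + ω (pmul y z) x + ω (pmul z x) y = 0)
    (smul scir : P →ₗ[K] P →ₗ[K] P)
    (hs : ∀ x y z : P, ω (smul x y) z = ω y (pmul x z))
    (hc : ∀ x y z : P, ω (scir x y) z = - ω y (pbr x z)) :
    (∀ x y z : P, smul x (smul y z) = smul (smul x y + smul y x) z) ∧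
    (∀ x y z : P,
      scir (scir x y) z - scir x (scir y z)
        = scir (scir y x) z - scir y (scir x z)) ∧
    (∀ x y z : P,
      smul (scir x y - scir y x) z = scir x (smul y z) - smul y (scir x z)) ∧
    (∀ x y z : P,
      scir (smul x y + smul y x) z = smul x (scir y z) + smul y (scir x z)) ∧
    (∀ x y : P, smul x y + smul y x = pmul x y) ∧
    (∀ x y : P, scir x y - scir y x = pbr x y) := by
  -- antisymmetry of ω
  have ωanti : ∀ a b : P, ω a b = - ω b a := by
    intro a b
    have h := hωalt (a + b)
    simp only [map_add, LinearMap.add_apply, hωalt] at h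
    linear_combination h
  have pbranti : ∀ a b : P, pbr a b = - pbr b a := by
    intro a b
    have h := halt (a + b)
    simp only [map_add, LinearMap.add_apply, halt, zero_add, add_zero] at h
    exact eq_neg_of_add_eq_zero_right h
  -- nondegeneracy in equation form
  have key : ∀ a b : P, (∀ w : P, ω a w = ω b w) → a = b := by
    intro a b h
    have h0 : a - b = 0 := by
      apply hωnd
      intro w
      simp only [map_sub, LinearMap.sub_apply, h w, sub_self]
    exact sub_eq_zero.mp h0
  -- sub-adjacent commutative product
  have hm : ∀ x y : P, smul x y + smul y x = pmul x y := by
    intro x y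
    apply key
    intro w
    simp only [map_add, LinearMap.add_apply, hs]
    have h2 := hωcyc2 x y w
    rw [hcomm w x] at h2
    have a1 := ωanti (pmul y w) x
    have a2 := ωanti (pmul x w) y
    rw [a1, a2] at h2
    linear_combination -h2
  -- sub-adjacent bracket
  have hb : ∀ x y : P, scir x y - scir y x = pbr x y := by
    intro x y
    apply key
    intro w
    simp only [map_sub, LinearMap.sub_apply, hc]
    have h1 := hωcyc1 x y w
    rw [pbranti w x] at h1
    simp only [map_neg, LinearMap.neg_apply] at h1
    have a1 := ωanti (pbr y w) x
    have a2 := ωanti (pbr x w) y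
    rw [a1, a2] at h1
    linear_combination -h1
  refine ⟨?_, ?_, ?_, ?_, hm, hb⟩
  · -- Zinbiel
    intro x y z
    apply key
    intro w
    rw [hm, hs, hs, hs, hcomm x y, hassoc]
  · -- pre-Lie
    intro x y z
    apply key
    intro w
    simp only [map_sub, LinearMap.sub_apply]
    have hA : ∀ x y : P, ω (scir (scir x y) z) w
        = -(ω y (pbr x (pbr w z))) - ω y (pbr x (scir z w)) := by
      intro x y
      have c0 := hc (scir x y) z w
      have a0 := ωanti z (pbr (scir x y) w)
      have h1 := hωcyc1 (scir x y) w z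
      have a1 := ωanti (pbr w z) (scir x y)
      have c1 := hc x y (pbr w z)
      have a2 := ωanti (pbr z (scir x y)) w
      have c2 := hc z w (scir x y)
      have a3 := ωanti (scir z w) (scir x y)
      have c3 := hc x y (scir z w)
      linear_combination c0 - a0 + h1 - a1 + c1 - a2 + c2 - a3 + c3
    have hB : ∀ x y : P, ω (scir x (scir y z)) w = ω z (pbr y (pbr x w)) := by
      intro x y
      rw [hc, hc, neg_neg]
    have d : ∀ t : P, ω x (pbr y t) - ω y (pbr x t) = ω (pbr x y) t := by
      intro t
      rw [← hb x y, map_sub, LinearMap.sub_apply, hc x y t, hc y x t]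
      ring
    have j : pbr x (pbr y w) - pbr y (pbr x w) = pbr (pbr x y) w := by
      have h := hjac x y w
      rw [pbranti w x, map_neg, pbranti w (pbr x y)] at h
      apply eq_of_sub_eq_zero
      calc pbr x (pbr y w) - pbr y (pbr x w) - pbr (pbr x y) w
          = pbr x (pbr y w) + -pbr y (pbr x w) + -pbr (pbr x y) w := by
            abel
        _ = 0 := h
    have jω := congrArg (ω z) j
    simp only [map_sub] at jω
    have fin : ω (pbr x y) (pbr w z) + ω (pbr x y) (scir z w)
        + ω z (pbr (pbr x y) w) = 0 := by
      have a1 := ωanti (pbr x y) (pbr w z)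
      have a2 := ωanti (pbr x y) (scir z w)
      have c1 := hc z w (pbr x y)
      have a3 := ωanti w (pbr z (pbr x y))
      have a4 := ωanti z (pbr (pbr x y) w)
      have h1 := hωcyc1 (pbr x y) w z
      linear_combination a1 + a2 + a3 + a4 - c1 - h1
    rw [hA x y, hA y x, hB x y, hB y x]
    linear_combination d (pbr w z) + d (scir z w) + jω + fin
  · -- compat 1
    intro x y z
    rw [hb]
    apply key
    intro w
    simp only [map_sub, LinearMap.sub_apply]
    rw [hs, hc, hs, hs, hc, hleib x y w]
    simp only [map_add]
    ring
  · -- compat 2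
    intro x y z
    rw [hm]
    apply key
    intro w
    simp only [map_add, LinearMap.add_apply]
    rw [hc, hs, hc, hs, hc]
    have e : pbr (pmul x y) w = pbr y (pmul x w) + pbr x (pmul y w) := by
      rw [pbranti (pmul x y) w, hleib w x y, hleib y x w, hleib x y w,
        pbranti w x, pbranti w y, pbranti y x]
      simp only [map_neg, LinearMap.neg_apply]
      rw [hcomm (pbr x w) y]
      abel
    rw [e]
    simp only [map_add]
    ring
end

section
/- Let (P,∗,∘) be a finite-dimensional pre-Poisson algebra over a field K, with sub-adjacent operations x·y := x∗y + y∗x and {x,y} := x∘y − y∘x. On the direct sum P ⊕ P* define (x+ξ)•(y+η) := x·y + ς(x)η + ς(y)ξ and ⟦x+ξ, y+η⟧ := {x,y} + ϱ(x)η − ϱ(y)ξ, where ς(x)η ∈ P* is the functional z ↦ η(x∗z) and ϱ(x)η ∈ P* is the functional z ↦ −η(x∘z). Then: (1) (P⊕P*, •, ⟦·,·⟧) is a Poisson algebra; (2) the bilinear form ω(x+ξ, y+η) := ξ(y) − η(x) is a symplectic structure on it; (3) P⊕0 and 0⊕P* are Poisson subalgebras. Hence (P⊕P*, •, ⟦·,·⟧,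 ω) is a phase space of the sub-adjacent Poisson algebra of (P,∗,∘). -/
/-- The semidirect product `P ⊕ P*` built from a finite-dimensional
pre-Poisson algebra is a phase space of the sub-adjacent Poisson algebra. -/
theorem phase_space_of_prePoisson
    {K : Type*} [Field K] {P : Type*} [AddCommGroup P] [Module K P]
    [FiniteDimensional K P]
    (mul cir : P →ₗ[K] P →ₗ[K] P)
    (hZin : ∀ x y z : P, mul x (mul y z) = mul (mul x y + mul y x) z)
    (hPre : ∀ x y z : P,
      cir (cir x y) z - cir x (cir y z) = cir (cir y x) z - cir y (cir x z))
    (hC1 : ∀ x y z : P,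
      mul (cir x y - cir y x) z = cir x (mul y z) - mul y (cir x z))
    (hC2 : ∀ x y z : P,
      cir (mul x y + mul y x) z = mul x (cir y z) + mul y (cir x z)) :
    ∀ bm bb : (P × Module.Dual K P) → (P × Module.Dual K P) → (P × Module.Dual K P),
      (∀ (x y : P) (ξ η : Module.Dual K P),
        (bm (x, ξ) (y, η)).1 = mul x y + mul y x ∧
        ∀ z : P, (bm (x, ξ) (y, η)).2 z = η (mul x z) + ξ (mul y z)) →
      (∀ (x y : P) (ξ η : Module.Dual K P),
        (bb (x, ξ) (y, η)).1 = cir x y - cir y x ∧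
        ∀ z : P, (bb (x, ξ) (y, η)).2 z = - η (cir x z) + ξ (cir y z)) →
      -- (1) (P ⊕ P*, •, ⟦·,·⟧) is a Poisson algebra
      ((∀ u v w : P × Module.Dual K P, bm (u + v) w = bm u w + bm v w) ∧
       (∀ (c : K) (u v : P × Module.Dual K P), bm (c • u) v = c • bm u v) ∧
       (∀ u v w : P × Module.Dual K P, bm u (v + w) = bm u v + bm u w) ∧
       (∀ (c : K) (u v : P × Module.Dual K P), bm u (c • v) = c • bm u v) ∧
       (∀ u v w : P × Module.Dual K P, bb (u + v) w = bb u w + bb v w) ∧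
       (∀ (c : K) (u v : P × Module.Dual K P), bb (c • u) v = c • bb u v) ∧
       (∀ u v w : P × Module.Dual K P, bb u (v + w) = bb u v + bb u w) ∧
       (∀ (c : K) (u v : P × Module.Dual K P), bb u (c • v) = c • bb u v) ∧
       (∀ u v : P × Module.Dual K P, bm u v = bm v u) ∧
       (∀ u v w : P × Module.Dual K P, bm (bm u v) w = bm u (bm v w)) ∧
       (∀ u : P × Module.Dual K P, bb u u = 0) ∧
       (∀ u v w : P × Module.Dual K P,
         bb u (bb v w) + bb v (bb w u) + bb w (bb u v) = 0) ∧
       (∀ u v w : P × Module.Dual K P,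
         bb u (bm v w) = bm (bb u v) w + bm v (bb u w))) ∧
      -- (2) ω(x+ξ, y+η) = ξ(y) − η(x) is a symplectic structure on it
      (∀ Ω : (P × Module.Dual K P) → (P × Module.Dual K P) → K,
        (∀ u v : P × Module.Dual K P, Ω u v = u.2 v.1 - v.2 u.1) →
        (∀ u : P × Module.Dual K P, Ω u u = 0) ∧
        (∀ u : P × Module.Dual K P, (∀ v, Ω u v = 0) → u = 0) ∧
        (∀ u v w : P × Module.Dual K P,
          Ω (bb u v) w + Ω (bb v w) u + Ω (bb w u) v = 0) ∧
        (∀ u v w : P × Module.Dual K P,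
          Ω (bm u v) w + Ω (bm v w) u + Ω (bm w u) v = 0)) ∧
      -- (3) P ⊕ 0 and 0 ⊕ P* are Poisson subalgebras
      (∀ x y : P,
        (bm (x, (0 : Module.Dual K P)) (y, (0 : Module.Dual K P))).2 = 0 ∧
        (bb (x, (0 : Module.Dual K P)) (y, (0 : Module.Dual K P))).2 = 0) ∧
      (∀ ξ η : Module.Dual K P,
        (bm ((0 : P), ξ) ((0 : P), η)).1 = 0 ∧
        (bb ((0 : P), ξ) ((0 : P), η)).1 = 0) := by
  intro bm bb hbm hbb
  -- projection-level descriptions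
  have hm1 : ∀ u v : P × Module.Dual K P, (bm u v).1 = mul u.1 v.1 + mul v.1 u.1 :=
    fun u v => (hbm u.1 v.1 u.2 v.2).1
  have hm2 : ∀ (u v : P × Module.Dual K P) (z : P),
      (bm u v).2 z = v.2 (mul u.1 z) + u.2 (mul v.1 z) :=
    fun u v => (hbm u.1 v.1 u.2 v.2).2
  have hb1 : ∀ u v : P × Module.Dual K P, (bb u v).1 = cir u.1 v.1 - cir v.1 u.1 :=
    fun u v => (hbb u.1 v.1 u.2 v.2).1
  have hb2 : ∀ (u v : P × Module.Dual K P) (z : P),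
      (bb u v).2 z = - v.2 (cir u.1 z) + u.2 (cir v.1 z) :=
    fun u v => (hbb u.1 v.1 u.2 v.2).2
  -- expanded identities in P
  have hZ : ∀ x y z : P, mul x (mul y z) = mul (mul x y) z + mul (mul y x) z := by
    intro x y z; rw [hZin x y z, map_add, LinearMap.add_apply]
  have hc1 : ∀ x y z : P,
      mul (cir x y) z - mul (cir y x) z = cir x (mul y z) - mul y (cir x z) := by
    intro x y z
    have h := hC1 x y z
    rwa [map_sub, LinearMap.sub_apply] at h
  have hc2 : ∀ x y z : P,
      cir (mul x y) z + cir (mul y x) z = mul x (cir y z) + mul y (cir x z) := by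
    intro x y z
    have h := hC2 x y z
    rwa [map_add, LinearMap.add_apply] at h
  -- expanded identities under a dual functional
  have dZ : ∀ (f : Module.Dual K P) (x y z : P),
      f (mul x (mul y z)) = f (mul (mul x y) z) + f (mul (mul y x) z) := by
    intro f x y z; rw [hZ x y z, map_add]
  have dP : ∀ (f : Module.Dual K P) (x y z : P),
      f (cir (cir x y) z) - f (cir x (cir y z))
        = f (cir (cir y x) z) - f (cir y (cir x z)) := by
    intro f x y z; rw [← map_sub, ← map_sub, hPre]
  have dC1 : ∀ (f : Module.Dual K P) (x y z : P),
      f (mul (cir x y) z) - f (mul (cir y x) z)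
        = f (cir x (mul y z)) - f (mul y (cir x z)) := by
    intro f x y z; rw [← map_sub, ← map_sub, hc1]
  have dC2 : ∀ (f : Module.Dual K P) (x y z : P),
      f (cir (mul x y) z) + f (cir (mul y x) z)
        = f (mul x (cir y z)) + f (mul y (cir x z)) := by
    intro f x y z; rw [← map_add, ← map_add, hc2]
  refine ⟨⟨?_, ?_, ?_, ?_, ?_, ?_, ?_, ?_, ?_, ?_, ?_, ?_, ?_⟩, ?_, ?_, ?_⟩
  · -- bm additive left
    intro u v w
    refine Prod.ext ?_ (LinearMap.ext fun z => ?_)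
    · simp only [hm1, Prod.fst_add, map_add, LinearMap.add_apply]; abel
    · simp only [hm2, Prod.fst_add, Prod.snd_add, LinearMap.add_apply, map_add]; ring
  · -- bm smul left
    intro c u v
    refine Prod.ext ?_ (LinearMap.ext fun z => ?_)
    · simp only [hm1, Prod.smul_fst, Prod.smul_snd, map_smul, LinearMap.smul_apply,
        smul_add]
    · simp only [hm2, Prod.smul_fst, Prod.smul_snd, map_smul, LinearMap.smul_apply,
        smul_eq_mul]; ring
  · -- bm additive right
    intro u v w
    refine Prod.ext ?_ (LinearMap.ext fun z => ?_)
    · simp only [hm1, Prod.fst_add, map_add, LinearMap.add_apply]; abel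
    · simp only [hm2, Prod.fst_add, Prod.snd_add, LinearMap.add_apply, map_add]; ring
  · -- bm smul right
    intro c u v
    refine Prod.ext ?_ (LinearMap.ext fun z => ?_)
    · simp only [hm1, Prod.smul_fst, Prod.smul_snd, map_smul, LinearMap.smul_apply,
        smul_add]
    · simp only [hm2, Prod.smul_fst, Prod.smul_snd, map_smul, LinearMap.smul_apply,
        smul_eq_mul]; ring
  · -- bb additive left
    intro u v w
    refine Prod.ext ?_ (LinearMap.ext fun z => ?_)
    · simp only [hb1, Prod.fst_add, map_add, LinearMap.add_apply]; abel
    · simp only [hb2, Prod.fst_add, Prod.snd_add, LinearMap.add_apply, map_add]; ring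
  · -- bb smul left
    intro c u v
    refine Prod.ext ?_ (LinearMap.ext fun z => ?_)
    · simp only [hb1, Prod.smul_fst, Prod.smul_snd, map_smul, LinearMap.smul_apply,
        smul_sub]
    · simp only [hb2, Prod.smul_fst, Prod.smul_snd, map_smul, LinearMap.smul_apply,
        smul_eq_mul]; ring
  · -- bb additive right
    intro u v w
    refine Prod.ext ?_ (LinearMap.ext fun z => ?_)
    · simp only [hb1, Prod.fst_add, map_add, LinearMap.add_apply]; abel
    · simp only [hb2, Prod.fst_add, Prod.snd_add, LinearMap.add_apply, map_add]; ring
  · -- bb smul right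
    intro c u v
    refine Prod.ext ?_ (LinearMap.ext fun z => ?_)
    · simp only [hb1, Prod.smul_fst, Prod.smul_snd, map_smul, LinearMap.smul_apply,
        smul_sub]
    · simp only [hb2, Prod.smul_fst, Prod.smul_snd, map_smul, LinearMap.smul_apply,
        smul_eq_mul]; ring
  · -- commutativity
    intro u v
    refine Prod.ext ?_ (LinearMap.ext fun z => ?_)
    · rw [hm1, hm1, add_comm]
    · rw [hm2, hm2, add_comm]
  · -- associativity
    intro u v w
    refine Prod.ext ?_ (LinearMap.ext fun z => ?_)
    · simp only [hm1, map_add, LinearMap.add_apply]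
      linear_combination (norm := module)
        (- hZ u.1 v.1 w.1 + hZ w.1 u.1 v.1 - hZ u.1 w.1 v.1 + hZ w.1 v.1 u.1)
    · simp only [hm2, hm1, map_add, LinearMap.add_apply]
      linear_combination
        (- dZ w.2 v.1 u.1 z + dZ v.2 u.1 w.1 z - dZ v.2 w.1 u.1 z + dZ u.2 v.1 w.1 z)
  · -- alternating
    intro u
    refine Prod.ext ?_ (LinearMap.ext fun z => ?_)
    · simp [hb1]
    · simp [hb2]
  · -- Jacobi
    intro u v w
    refine Prod.ext ?_ (LinearMap.ext fun z => ?_)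
    · simp only [hb1, Prod.fst_add, Prod.fst_zero, map_sub, LinearMap.sub_apply]
      linear_combination (norm := module)
        (- hPre v.1 w.1 u.1 - hPre w.1 u.1 v.1 - hPre u.1 v.1 w.1)
    · simp only [hb2, hb1, Prod.snd_add, Prod.snd_zero, LinearMap.add_apply,
        LinearMap.zero_apply, map_sub, LinearMap.sub_apply]
      linear_combination (dP u.2 v.1 w.1 z + dP v.2 w.1 u.1 z + dP w.2 u.1 v.1 z)
  · -- Leibniz
    intro u v w
    refine Prod.ext ?_ (LinearMap.ext fun z => ?_)
    · simp only [hb1, hm1, Prod.fst_add, map_add, map_sub, LinearMap.add_apply,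
        LinearMap.sub_apply]
      linear_combination (norm := module)
        (- hc1 u.1 v.1 w.1 - hc1 u.1 w.1 v.1 - hc2 v.1 w.1 u.1)
    · simp only [hb2, hm2, hb1, hm1, Prod.snd_add, LinearMap.add_apply,
        map_add, map_sub, LinearMap.sub_apply]
      linear_combination
        (- dC1 w.2 u.1 v.1 z - dC1 v.2 u.1 w.1 z + dC1 u.2 v.1 w.1 z
          + dC1 u.2 w.1 v.1 z + dC2 u.2 v.1 w.1 z)
  · -- (2) symplectic structure
    intro Ω hΩ
    refine ⟨?_, ?_, ?_, ?_⟩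
    · intro u; rw [hΩ]; ring
    · intro u h
      refine Prod.ext ?_ (LinearMap.ext fun y => ?_)
      · refine (Module.forall_dual_apply_eq_zero_iff K u.1).mp fun φ => ?_
        have h0 := h (0, φ)
        rw [hΩ] at h0
        simpa using h0.symm
      · have h0 := h (y, 0)
        rw [hΩ] at h0
        simpa using h0
    · intro u v w
      simp only [hΩ, hb2, hb1, map_sub]
      ring
    · intro u v w
      simp only [hΩ, hm2, hm1, map_add]
      ring
  · -- (3) P ⊕ 0 is a subalgebra
    intro x y
    constructor
    · exact LinearMap.ext fun z => by
        simpa using hm2 (x, (0 : Module.Dual K P)) (y, (0 : Module.Dual K P)) z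
    · exact LinearMap.ext fun z => by
        simpa using hb2 (x, (0 : Module.Dual K P)) (y, (0 : Module.Dual K P)) z
  · -- 0 ⊕ P* is a subalgebra
    intro ξ η
    constructor
    · simpa using hm1 ((0 : P), ξ) ((0 : P), η)
    · simpa using hb1 ((0 : P), ξ) ((0 : P), η)
end

section
/- Let (P,·_P,{·,·}_P) be a finite-dimensional Poisson algebra over a field K, and suppose (P⊕P*, •, ⟦·,·⟧) is a Poisson algebra such that: the bilinear form ω(x+ξ, y+η) := ξ(y) − η(x) is a symplectic structure on it; P⊕0 is a Poisson subalgebra whose induced operations coincide with ·_P and {·,·}_P; and 0⊕P* is a Poisson subalgebra. Let ∗ and ∘ be bilinear operations on P⊕P* satisfying ω(u∗v, w) = ω(v, u•w) and ω(u∘v, w) = −ω(v, ⟦u,w⟧) for all u,v,w ∈ P⊕P*. Then: for all x,y ∈ P, x∗y ∈ P and x∘y ∈ P; for all ξ,η ∈ P*, ξ∗η ∈ P* and ξ∘η ∈ P*; and x∗y + y∗x = x·_P y and x∘y − y∘x = {x,y}_P for all x,y ∈ P. In particular, P inherits a pre-Poisson algebra structure whose sub-adjacent Poisson algebra is (P,·_P,{·,·}_P).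 -/
section

variable {K : Type*} [Field K] {P : Type*} [AddCommGroup P] [Module K P]

/-- The canonical bilinear form `ω(x+ξ, y+η) = ξ(y) − η(x)` on `P ⊕ P*`. -/
def omegaStd (u v : P × Module.Dual K P) : K := u.2 v.1 - v.2 u.1

/-- In a phase space of a Poisson algebra, the pre-Poisson
operations obtained from the symplectic form restrict to `P` and `P*`, and on
`P` their sub-adjacent operations recover the original Poisson structure. -/
theorem prePoisson_restriction_of_phase_space
    [FiniteDimensional K P]
    (pmul pbr : P →ₗ[K] P →ₗ[K] P)
    (hcomm : ∀ x y : P, pmul x y = pmul y x)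
    (hassoc : ∀ x y z : P, pmul (pmul x y) z = pmul x (pmul y z))
    (halt : ∀ x : P, pbr x x = 0)
    (hjac : ∀ x y z : P, pbr x (pbr y z) + pbr y (pbr z x) + pbr z (pbr x y) = 0)
    (hleib : ∀ x y z : P, pbr x (pmul y z) = pmul (pbr x y) z + pmul y (pbr x z))
    (bm bb bs bc : (P × Module.Dual K P) →ₗ[K] (P × Module.Dual K P) →ₗ[K]
      (P × Module.Dual K P))
    -- `(P ⊕ P*, •, ⟦·,·⟧)` is a Poisson algebra
    (hbigcomm : ∀ u v : P × Module.Dual K P, bm u v = bm v u)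
    (hbigassoc : ∀ u v w : P × Module.Dual K P, bm (bm u v) w = bm u (bm v w))
    (hbigalt : ∀ u : P × Module.Dual K P, bb u u = 0)
    (hbigjac : ∀ u v w : P × Module.Dual K P,
      bb u (bb v w) + bb v (bb w u) + bb w (bb u v) = 0)
    (hbigleib : ∀ u v w : P × Module.Dual K P,
      bb u (bm v w) = bm (bb u v) w + bm v (bb u w))
    -- `ω` is a symplectic structure on it
    (hωalt : ∀ u : P × Module.Dual K P, omegaStd u u = 0)
    (hωnd : ∀ u : P × Module.Dual K P, (∀ v, omegaStd u v = 0) → u = 0)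
    (hωcyc1 : ∀ u v w : P × Module.Dual K P,
      omegaStd (bb u v) w + omegaStd (bb v w) u + omegaStd (bb w u) v = 0)
    (hωcyc2 : ∀ u v w : P × Module.Dual K P,
      omegaStd (bm u v) w + omegaStd (bm v w) u + omegaStd (bm w u) v = 0)
    -- `P ⊕ 0` is a Poisson subalgebra whose operations coincide with those of `P`
    (hPsub : ∀ x y : P,
      bm (x, (0 : Module.Dual K P)) (y, 0) = (pmul x y, 0) ∧
      bb (x, (0 : Module.Dual K P)) (y, 0) = (pbr x y, 0))
    -- `0 ⊕ P*` is a Poisson subalgebra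
    (hQsub : ∀ ξ η : Module.Dual K P,
      (bm ((0 : P), ξ) (0, η)).1 = 0 ∧ (bb ((0 : P), ξ) (0, η)).1 = 0)
    -- `∗` and `∘` are the operations determined by `ω`
    (hadj1 : ∀ u v w : P × Module.Dual K P,
      omegaStd (bs u v) w = omegaStd v (bm u w))
    (hadj2 : ∀ u v w : P × Module.Dual K P,
      omegaStd (bc u v) w = - omegaStd v (bb u w)) :
    -- `P` is closed under `∗` and `∘`
    (∀ x y : P,
      (bs (x, (0 : Module.Dual K P)) (y, 0)).2 = 0 ∧
      (bc (x, (0 : Module.Dual K P)) (y, 0)).2 = 0) ∧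
    -- `P*` is closed under `∗` and `∘`
    (∀ ξ η : Module.Dual K P,
      (bs ((0 : P), ξ) (0, η)).1 = 0 ∧ (bc ((0 : P), ξ) (0, η)).1 = 0) ∧
    -- the sub-adjacent operations on `P` recover the original Poisson structure
    (∀ x y : P,
      bs (x, (0 : Module.Dual K P)) (y, 0) + bs (y, (0 : Module.Dual K P)) (x, 0)
        = (pmul x y, 0) ∧
      bc (x, (0 : Module.Dual K P)) (y, 0) - bc (y, (0 : Module.Dual K P)) (x, 0)
        = (pbr x y, 0)) ∧
    -- in particular, `P` inherits a pre-Poisson algebra structure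
    (∀ s c : P → P → P,
      (∀ x y : P, s x y = (bs (x, (0 : Module.Dual K P)) (y, 0)).1) →
      (∀ x y : P, c x y = (bc (x, (0 : Module.Dual K P)) (y, 0)).1) →
      (∀ x y z : P, s x (s y z) = s (s x y + s y x) z) ∧
      (∀ x y z : P, c (c x y) z - c x (c y z) = c (c y x) z - c y (c x z)) ∧
      (∀ x y z : P, s (c x y - c y x) z = c x (s y z) - s y (c x z)) ∧
      (∀ x y z : P, c (s x y + s y x) z = s x (c y z) + s y (c x z))) := by

  -- ω linearity lemmas
  have ωadd1 : ∀ A B w : P × Module.Dual K P,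
      omegaStd (A + B) w = omegaStd A w + omegaStd B w := by
    intro A B w; simp [omegaStd]; ring
  have ωsub1 : ∀ A B w : P × Module.Dual K P,
      omegaStd (A - B) w = omegaStd A w - omegaStd B w := by
    intro A B w; simp [omegaStd]; ring
  have ωadd2 : ∀ w A B : P × Module.Dual K P,
      omegaStd w (A + B) = omegaStd w A + omegaStd w B := by
    intro w A B; simp [omegaStd, map_add]; ring
  have ωsub2 : ∀ w A B : P × Module.Dual K P,
      omegaStd w (A - B) = omegaStd w A - omegaStd w B := by
    intro w A B; simp [omegaStd, map_sub]; ring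
  have ωneg1 : ∀ A w : P × Module.Dual K P,
      omegaStd (-A) w = - omegaStd A w := by
    intro A w; simp only [omegaStd, Prod.fst_neg, Prod.snd_neg, LinearMap.neg_apply,
      map_neg]; ring
  have ωanti : ∀ u v : P × Module.Dual K P, omegaStd u v = - omegaStd v u := by
    intro u v; simp only [omegaStd]; ring
  have hext : ∀ A B : P × Module.Dual K P,
      (∀ w, omegaStd A w = omegaStd B w) → A = B := by
    intro A B h
    have h0 : A - B = 0 := hωnd _ (fun w => by rw [ωsub1, h]; ring)
    exact sub_eq_zero.mp h0
  -- bb is antisymmetric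
  have hbbanti : ∀ u v : P × Module.Dual K P, bb u v = - bb v u := by
    intro u v
    have h := hbigalt (u + v)
    simp only [map_add, LinearMap.add_apply, hbigalt, zero_add, add_zero] at h
    first
    | exact eq_neg_of_add_eq_zero_left h
    | exact eq_neg_of_add_eq_zero_right h
  -- the sub-adjacent operations of (bs, bc) are (bm, bb), globally
  have key1 : ∀ u v : P × Module.Dual K P, bs u v + bs v u = bm u v := by
    intro u v
    apply hext; intro w
    rw [ωadd1, hadj1 u v w, hadj1 v u w]
    have hc := hωcyc2 u v w
    rw [hbigcomm w u] at hc
    rw [ωanti v (bm u w), ωanti u (bm v w)]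
    linear_combination -hc
  have key2 : ∀ u v : P × Module.Dual K P, bc u v - bc v u = bb u v := by
    intro u v
    apply hext; intro w
    rw [ωsub1, hadj2 u v w, hadj2 v u w]
    have hc := hωcyc1 u v w
    rw [hbbanti w u, ωneg1] at hc
    rw [ωanti v (bb u w), ωanti u (bb v w)]
    linear_combination -hc
  -- adjoint-form module identities
  have jacad : ∀ u v t : P × Module.Dual K P,
      bb (bb u v) t = bb u (bb v t) - bb v (bb u t) := by
    intro u v t
    have h := hbigjac u v t
    rw [hbbanti t u, map_neg, hbbanti t (bb u v)] at h
    have h2 : bb u (bb v t) - bb v (bb u t) - bb (bb u v) t = 0 := by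
      rw [← h]; abel
    exact (sub_eq_zero.mp h2).symm
  have hMbb : ∀ u v t : P × Module.Dual K P,
      bb (bm u v) t = bb v (bm u t) + bb u (bm v t) := by
    intro u v t
    have h1 := hbigleib v u t
    have h2 := hbigleib u v t
    have h3 := hbigleib t u v
    rw [hbbanti v u] at h1
    rw [hbbanti t u, hbbanti t v] at h3
    rw [hbbanti (bm u v) t, h3, h1, h2]
    simp only [map_neg, LinearMap.neg_apply]
    rw [hbigcomm (bb u t) v]
    abel
  -- closure of P under bs and bc
  have cls1 : ∀ x y : P, (bs (x, (0 : Module.Dual K P)) (y, 0)).2 = 0 := by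
    intro x y
    apply LinearMap.ext; intro z
    have h := hadj1 (x, (0 : Module.Dual K P)) (y, 0) (z, 0)
    rw [(hPsub x z).1] at h
    simpa [omegaStd] using h
  have cls2 : ∀ x y : P, (bc (x, (0 : Module.Dual K P)) (y, 0)).2 = 0 := by
    intro x y
    apply LinearMap.ext; intro z
    have h := hadj2 (x, (0 : Module.Dual K P)) (y, 0) (z, 0)
    rw [(hPsub x z).2] at h
    simpa [omegaStd] using h
  -- closure of P* under bs and bc
  have cls3 : ∀ ξ η : Module.Dual K P, (bs ((0 : P), ξ) (0, η)).1 = 0 := by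
    intro ξ η
    rw [← Module.forall_dual_apply_eq_zero_iff K]
    intro ζ
    have h := hadj1 ((0 : P), ξ) (0, η) (0, ζ)
    have hq := (hQsub ξ ζ).1
    simp only [omegaStd, map_zero, hq] at h
    linear_combination -h
  have cls4 : ∀ ξ η : Module.Dual K P, (bc ((0 : P), ξ) (0, η)).1 = 0 := by
    intro ξ η
    rw [← Module.forall_dual_apply_eq_zero_iff K]
    intro ζ
    have h := hadj2 ((0 : P), ξ) (0, η) (0, ζ)
    have hq := (hQsub ξ ζ).2
    simp only [omegaStd, map_zero, hq] at h
    linear_combination -h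
  -- sub-adjacent structure on P
  have sub1 : ∀ x y : P,
      bs (x, (0 : Module.Dual K P)) (y, 0) + bs (y, (0 : Module.Dual K P)) (x, 0)
        = (pmul x y, 0) := by
    intro x y
    rw [key1, (hPsub x y).1]
  have sub2 : ∀ x y : P,
      bc (x, (0 : Module.Dual K P)) (y, 0) - bc (y, (0 : Module.Dual K P)) (x, 0)
        = (pbr x y, 0) := by
    intro x y
    rw [key2, (hPsub x y).2]
  -- global pre-Poisson identities
  have zin : ∀ u v w : P × Module.Dual K P,
      bs u (bs v w) = bs (bm u v) w := by
    intro u v w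
    apply hext; intro t
    rw [hadj1 u (bs v w) t, hadj1 v w (bm u t), hadj1 (bm u v) w t]
    have hm : bm v (bm u t) = bm (bm u v) t := by
      rw [← hbigassoc v u t, hbigcomm (bm v u) t, hbigcomm v u, hbigcomm t (bm u v),
        hbigassoc]
    rw [hm]
  have preL : ∀ u v w : P × Module.Dual K P,
      bc (bb u v) w = bc u (bc v w) - bc v (bc u w) := by
    intro u v w
    apply hext; intro t
    rw [ωsub1, hadj2 (bb u v) w t, hadj2 u (bc v w) t, hadj2 v (bc u w) t,
      hadj2 v w (bb u t), hadj2 u w (bb v t), jacad u v t, ωsub2]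
    ring
  have comp1 : ∀ u v w : P × Module.Dual K P,
      bs (bb u v) w = bc u (bs v w) - bs v (bc u w) := by
    intro u v w
    apply hext; intro t
    rw [ωsub1, hadj1 (bb u v) w t, hadj2 u (bs v w) t, hadj1 v w (bb u t),
      hadj1 v (bc u w) t, hadj2 u w (bm v t), hbigleib u v t, ωadd2]
    ring
  have comp2 : ∀ u v w : P × Module.Dual K P,
      bc (bm u v) w = bs u (bc v w) + bs v (bc u w) := by
    intro u v w
    apply hext; intro t
    rw [ωadd1, hadj2 (bm u v) w t, hadj1 u (bc v w) t, hadj2 v w (bm u t),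
      hadj1 v (bc u w) t, hadj2 u w (bm v t), hMbb u v t, ωadd2]
    ring
  refine ⟨fun x y => ⟨cls1 x y, cls2 x y⟩, fun ξ η => ⟨cls3 ξ η, cls4 ξ η⟩,
    fun x y => ⟨sub1 x y, sub2 x y⟩, ?_⟩
  intro s c hs hc
  have bsP : ∀ x y : P, bs (x, (0 : Module.Dual K P)) (y, 0) = (s x y, 0) := by
    intro x y
    have := cls1 x y
    ext
    · simp [hs x y]
    · simp [this]
  have bcP : ∀ x y : P, bc (x, (0 : Module.Dual K P)) (y, 0) = (c x y, 0) := by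
    intro x y
    have := cls2 x y
    ext
    · simp [hc x y]
    · simp [this]
  have hsum : ∀ x y : P, s x y + s y x = pmul x y := by
    intro x y
    have h := sub1 x y
    rw [bsP x y, bsP y x] at h
    exact congrArg Prod.fst h
  have hdiff : ∀ x y : P, c x y - c y x = pbr x y := by
    intro x y
    have h := sub2 x y
    rw [bcP x y, bcP y x] at h
    exact congrArg Prod.fst h
  refine ⟨?_, ?_, ?_, ?_⟩
  · intro x y z
    have h := zin (x, (0 : Module.Dual K P)) (y, 0) (z, 0)
    rw [bsP y z, bsP x (s y z), (hPsub x y).1, bsP (pmul x y) z] at h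
    have h1 : s x (s y z) = s (pmul x y) z := congrArg Prod.fst h
    rw [h1, hsum x y]
  · intro x y z
    have h := preL (x, (0 : Module.Dual K P)) (y, 0) (z, 0)
    rw [(hPsub x y).2, bcP y z, bcP x z, bcP x (c y z), bcP y (c x z),
      bcP (pbr x y) z] at h
    have h1 : c (pbr x y) z = c x (c y z) - c y (c x z) := by
      have := congrArg Prod.fst h
      simpa using this
    have h2 : c (c x y - c y x) z = c (c x y) z - c (c y x) z := by
      rw [hc (c x y - c y x) z, hc (c x y) z, hc (c y x) z]
      have hp : ((c x y - c y x, (0 : Module.Dual K P)) : P × Module.Dual K P)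
          = (c x y, (0 : Module.Dual K P)) - (c y x, (0 : Module.Dual K P)) := by
        simp [Prod.ext_iff]
      rw [hp, map_sub, LinearMap.sub_apply, Prod.fst_sub]
    rw [hdiff x y] at h2
    have h3 : c (c x y) z - c (c y x) z = c x (c y z) - c y (c x z) := by
      rw [← h2, h1]
    exact sub_eq_sub_iff_sub_eq_sub.mp h3
  · intro x y z
    have h := comp1 (x, (0 : Module.Dual K P)) (y, 0) (z, 0)
    rw [(hPsub x y).2, bsP y z, bcP x z, bcP x (s y z), bsP y (c x z),
      bsP (pbr x y) z] at h
    have h1 : s (pbr x y) z = c x (s y z) - s y (c x z) := by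
      have := congrArg Prod.fst h
      simpa using this
    rw [← hdiff x y] at h1
    exact h1
  · intro x y z
    have h := comp2 (x, (0 : Module.Dual K P)) (y, 0) (z, 0)
    rw [(hPsub x y).1, bcP y z, bcP x z, bsP x (c y z), bsP y (c x z),
      bcP (pmul x y) z] at h
    have h1 : c (pmul x y) z = s x (c y z) + s y (c x z) := by
      have := congrArg Prod.fst h
      simpa using this
    rw [← hsum x y] at h1
    exact h1


end
end

section
/- Let (P,∗,∘,ω) be a quadratic pre-Poisson algebra over a field K of characteristic different from 2, and let x·y := x∗y + y∗x and {x,y} := x∘y − y∘x be the sub-adjacent operations. Then for all x,y,z ∈ P: ω(x∗y, z) = ω(z∗y, x) and ω(x∘y, z) = −ω(z∘y, x); moreover ω is a symplectic structure on the sub-adjacent Poisson algebra, i.e., ω({x,y},z) + ω({y,z},x) + ω({z,x},y) = 0 and ω(x·y,z) + ω(y·z,x) + ω(z·x,y) = 0. -/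
/-- In a quadratic pre-Poisson algebra (char ≠ 2), the form
satisfies the extra invariance identities and is a symplectic structure on the
sub-adjacent Poisson algebra. -/
theorem quadratic_prePoisson_symplectic
    {K : Type*} [Field K] {P : Type*} [AddCommGroup P] [Module K P]
    (hchar : (2 : K) ≠ 0)
    (mul cir : P →ₗ[K] P →ₗ[K] P)
    (hZin : ∀ x y z : P, mul x (mul y z) = mul (mul x y + mul y x) z)
    (hPre : ∀ x y z : P,
      cir (cir x y) z - cir x (cir y z) = cir (cir y x) z - cir y (cir x z))
    (hC1 : ∀ x y z : P,
      mul (cir x y - cir y x) z = cir x (mul y z) - mul y (cir x z))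
    (hC2 : ∀ x y z : P,
      cir (mul x y + mul y x) z = mul x (cir y z) + mul y (cir x z))
    (ω : P →ₗ[K] P →ₗ[K] K)
    (hωalt : ∀ x : P, ω x x = 0)
    (hωnd : ∀ x : P, (∀ y : P, ω x y = 0) → x = 0)
    (hq1 : ∀ x y z : P, ω (mul x y) z = ω y (mul x z + mul z x))
    (hq2 : ∀ x y z : P, ω (cir x y) z = - ω y (cir x z - cir z x)) :
    (∀ x y z : P, ω (mul x y) z = ω (mul z y) x) ∧
    (∀ x y z : P, ω (cir x y) z = - ω (cir z y) x) ∧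
    (∀ x y z : P,
      ω (cir x y - cir y x) z + ω (cir y z - cir z y) x
        + ω (cir z x - cir x z) y = 0) ∧
    (∀ x y z : P,
      ω (mul x y + mul y x) z + ω (mul y z + mul z y) x
        + ω (mul z x + mul x z) y = 0) := by
  have hskew : ∀ a b : P, ω a b = - ω b a := by
    intro a b
    have h := hωalt (a + b)
    simp only [map_add, LinearMap.add_apply] at h
    linear_combination h - hωalt a - hωalt b
  have h1 : ∀ x y z : P, ω (mul x y) z = ω (mul z y) x := by
    intro x y z
    rw [hq1, hq1, add_comm]
  have h2 : ∀ x y z : P, ω (cir x y) z = - ω (cir z y) x := by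
    intro x y z
    rw [hq2, hq2]
    simp only [map_sub]
    ring
  refine ⟨h1, h2, ?_, ?_⟩
  · intro x y z
    have hC : ω (cir y z) x = ω (cir y x) z - ω (cir x y) z := by
      have h := hq2 y z x
      simp only [map_sub] at h
      rw [h, hskew z (cir y x), hskew z (cir x y)]
      ring
    simp only [map_sub, LinearMap.sub_apply]
    linear_combination -(h2 x y z) + (h2 y x z) - (h2 y z x) + 2 * hC
  · intro x y z
    have hQ : ω (mul x y) z = - ω (mul x z) y - ω (mul z x) y := by
      have h := hq1 x y z
      simp only [map_add] at h
      rw [h, hskew y (mul x z), hskew y (mul z x)]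
      ring
    simp only [map_add, LinearMap.add_apply]
    linear_combination -(h1 x y z) + (h1 y x z) + (h1 y z x) + 2 * hQ
end

section
/- Let (P,∗,∘) be a finite-dimensional pre-Poisson algebra over a field K and r ∈ P⊗P such that r − τ(r) is (L,R)-invariant. Set I := r₊ − r₋ and define bilinear operations on P* by (ξ ∗₊ η)(y) := ξ(y∗(Iη)) and (ξ ∘₊ η)(y) := −ξ(y∘(Iη)) for all y ∈ P. Then (P*, ∗₊, ∘₊) is a pre-Poisson algebra. -/
open TensorProduct

section

variable {K : Type*} [Field K] {P : Type*} [AddCommGroup P] [Module K P]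

/-- The map `r₊ : P* → P` induced by `r ∈ P ⊗ P`: if `r = Σᵢ aᵢ ⊗ bᵢ` then
`r₊(ξ) = Σᵢ ξ(aᵢ) • bᵢ`, so that `η(r₊ ξ) = r(ξ, η)`. -/
noncomputable def rPlus (r : P ⊗[K] P) (ξ : Module.Dual K P) : P :=
  TensorProduct.lift ((LinearMap.lsmul K P).comp ξ) r

/-- The map `r₋ : P* → P` induced by `r ∈ P ⊗ P`: if `r = Σᵢ aᵢ ⊗ bᵢ` then
`r₋(η) = Σᵢ η(bᵢ) • aᵢ`, so that `ξ(r₋ η) = r(ξ, η)`. -/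
noncomputable def rMinus (r : P ⊗[K] P) (η : Module.Dual K P) : P :=
  TensorProduct.lift (((LinearMap.lsmul K P).comp η).flip) r

/-- `(L,R)`-invariance of an element `a ∈ P ⊗ P`. -/
def LRinv (mul cir : P →ₗ[K] P →ₗ[K] P) (a : P ⊗[K] P) : Prop :=
  (∀ x : P,
    (TensorProduct.map (mul x) (LinearMap.id : P →ₗ[K] P)
      - TensorProduct.map (LinearMap.id : P →ₗ[K] P) (mul x + mul.flip x)) a = 0) ∧
  (∀ x : P,
    (TensorProduct.map (cir x) (LinearMap.id : P →ₗ[K] P)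
      + TensorProduct.map (LinearMap.id : P →ₗ[K] P) (cir x - cir.flip x)) a = 0)

/-- The Zinbiel Yang–Baxter expression `Z(r)` for `r = Σᵢ aᵢ ⊗ bᵢ`. -/
noncomputable def Zsum (mul : P →ₗ[K] P →ₗ[K] P) {n : ℕ} (a b : Fin n → P) :
    P ⊗[K] (P ⊗[K] P) :=
  - ∑ i, ∑ j, mul (a i) (a j) ⊗ₜ[K] (b j ⊗ₜ[K] b i)
  - ∑ i, ∑ j, b j ⊗ₜ[K] (mul (a i) (a j) ⊗ₜ[K] b i)
  + ∑ i, ∑ j, (mul (a i) (b j) + mul (b j) (a i)) ⊗ₜ[K] (a j ⊗ₜ[K] b i)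
  + ∑ i, ∑ j, a i ⊗ₜ[K] ((mul (b i) (a j) + mul (a j) (b i)) ⊗ₜ[K] b j)
  - ∑ i, ∑ j, a i ⊗ₜ[K] (a j ⊗ₜ[K] (mul (b i) (b j) + mul (b j) (b i)))

/-- The S-equation expression `S(r)` for `r = Σᵢ aᵢ ⊗ bᵢ`. -/
noncomputable def Ssum (cir : P →ₗ[K] P →ₗ[K] P) {n : ℕ} (a b : Fin n → P) :
    P ⊗[K] (P ⊗[K] P) :=
  ∑ i, ∑ j, cir (a i) (a j) ⊗ₜ[K] (b j ⊗ₜ[K] b i)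
  - ∑ i, ∑ j, b j ⊗ₜ[K] (cir (a i) (a j) ⊗ₜ[K] b i)
  + ∑ i, ∑ j, b j ⊗ₜ[K] ((cir (a i) (a j) - cir (a j) (a i)) ⊗ₜ[K] b i)
  - ∑ i, ∑ j, (cir (a i) (b j) - cir (b j) (a i)) ⊗ₜ[K] (a j ⊗ₜ[K] b i)
  - ∑ i, ∑ j, a i ⊗ₜ[K] (a j ⊗ₜ[K] (cir (b i) (b j) - cir (b j) (b i)))

/-- The multiplication `∗_r` induced by `r` on the dual space:
`(ξ ∗_r η)(y) = η(r₊ξ ∗ y + y ∗ r₊ξ) − ξ(y ∗ r₋η)`. -/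
noncomputable def srOp (mul : P →ₗ[K] P →ₗ[K] P) (r : P ⊗[K] P)
    (ξ η : Module.Dual K P) : Module.Dual K P :=
  η ∘ₗ (mul (rPlus r ξ) + mul.flip (rPlus r ξ)) - ξ ∘ₗ mul.flip (rMinus r η)

/-- The multiplication `∘_r` induced by `r` on the dual space:
`(ξ ∘_r η)(y) = −η(r₊ξ ∘ y − y ∘ r₊ξ) + ξ(y ∘ r₋η)`. -/
noncomputable def crOp (cir : P →ₗ[K] P →ₗ[K] P) (r : P ⊗[K] P)
    (ξ η : Module.Dual K P) : Module.Dual K P :=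
  - (η ∘ₗ (cir (rPlus r ξ) - cir.flip (rPlus r ξ))) + ξ ∘ₗ cir.flip (rMinus r η)


/-- The multiplication `∗₊` on the dual space: `(ξ ∗₊ η)(y) = ξ(y ∗ (Iη))`
where `I = r₊ − r₋`. -/
noncomputable def sPlusOp (mul : P →ₗ[K] P →ₗ[K] P) (r : P ⊗[K] P)
    (ξ η : Module.Dual K P) : Module.Dual K P :=
  ξ ∘ₗ mul.flip (rPlus r η - rMinus r η)

/-- The multiplication `∘₊` on the dual space: `(ξ ∘₊ η)(y) = −ξ(y ∘ (Iη))`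
where `I = r₊ − r₋`. -/
noncomputable def cPlusOp (cir : P →ₗ[K] P →ₗ[K] P) (r : P ⊗[K] P)
    (ξ η : Module.Dual K P) : Module.Dual K P :=
  - (ξ ∘ₗ cir.flip (rPlus r η - rMinus r η))

/-! ### Auxiliary lemmas -/

lemma rPlus_tmul (x y : P) (φ : Module.Dual K P) : rPlus (x ⊗ₜ[K] y) φ = φ x • y := by
  simp [rPlus]

lemma rMinus_tmul (x y : P) (φ : Module.Dual K P) : rMinus (x ⊗ₜ[K] y) φ = φ y • x := by
  simp [rMinus]

lemma rPlus_zero (φ : Module.Dual K P) : rPlus (0 : P ⊗[K] P) φ = 0 := by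
  simp [rPlus]

lemma rMinus_zero (φ : Module.Dual K P) : rMinus (0 : P ⊗[K] P) φ = 0 := by
  simp [rMinus]

lemma rPlus_add (s t : P ⊗[K] P) (φ : Module.Dual K P) :
    rPlus (s + t) φ = rPlus s φ + rPlus t φ := by
  unfold rPlus; exact map_add _ s t

lemma rMinus_add (s t : P ⊗[K] P) (φ : Module.Dual K P) :
    rMinus (s + t) φ = rMinus s φ + rMinus t φ := by
  unfold rMinus; exact map_add _ s t

lemma rPlus_sub (s t : P ⊗[K] P) (φ : Module.Dual K P) :
    rPlus (s - t) φ = rPlus s φ - rPlus t φ := by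
  unfold rPlus; exact map_sub _ s t

lemma rMinus_sub (s t : P ⊗[K] P) (φ : Module.Dual K P) :
    rMinus (s - t) φ = rMinus s φ - rMinus t φ := by
  unfold rMinus; exact map_sub _ s t

lemma rPlus_neg (s : P ⊗[K] P) (φ : Module.Dual K P) : rPlus (-s) φ = - rPlus s φ := by
  unfold rPlus; exact map_neg _ s

lemma rPlus_pair (s : P ⊗[K] P) (φ ψ : Module.Dual K P) :
    ψ (rPlus s φ) = φ (rMinus s ψ) := by
  induction s using TensorProduct.induction_on with
  | zero => rw [rPlus_zero, rMinus_zero, map_zero, map_zero]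
  | tmul x y => rw [rPlus_tmul, rMinus_tmul, map_smul, map_smul, smul_eq_mul,
      smul_eq_mul, mul_comm]
  | add s t hs ht => rw [rPlus_add, rMinus_add, map_add, map_add, hs, ht]

lemma rPlus_comm (s : P ⊗[K] P) (φ : Module.Dual K P) :
    rPlus (TensorProduct.comm K P P s) φ = rMinus s φ := by
  induction s using TensorProduct.induction_on with
  | zero => rw [map_zero, rPlus_zero, rMinus_zero]
  | tmul x y => rw [TensorProduct.comm_tmul, rPlus_tmul, rMinus_tmul]
  | add s t hs ht => rw [map_add, rPlus_add, rMinus_add, hs, ht]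

lemma rMinus_comm (s : P ⊗[K] P) (φ : Module.Dual K P) :
    rMinus (TensorProduct.comm K P P s) φ = rPlus s φ := by
  induction s using TensorProduct.induction_on with
  | zero => rw [map_zero, rPlus_zero, rMinus_zero]
  | tmul x y => rw [TensorProduct.comm_tmul, rPlus_tmul, rMinus_tmul]
  | add s t hs ht => rw [map_add, rPlus_add, rMinus_add, hs, ht]

lemma rPlus_map (f g : P →ₗ[K] P) (s : P ⊗[K] P) (φ : Module.Dual K P) :
    rPlus (TensorProduct.map f g s) φ = g (rPlus s (φ ∘ₗ f)) := by
  induction s using TensorProduct.induction_on with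
  | zero => rw [map_zero, rPlus_zero, rPlus_zero, map_zero]
  | tmul x y =>
      rw [TensorProduct.map_tmul, rPlus_tmul, rPlus_tmul, map_smul, LinearMap.comp_apply]
  | add s t hs ht => rw [map_add, rPlus_add, rPlus_add, map_add, hs, ht]

/-- The map `I = r₊ - r₋`. -/
noncomputable def Iop (r : P ⊗[K] P) (φ : Module.Dual K P) : P :=
  rPlus r φ - rMinus r φ

lemma Iop_eq_rPlus (r : P ⊗[K] P) (φ : Module.Dual K P) :
    rPlus (r - TensorProduct.comm K P P r) φ = Iop r φ := by
  rw [rPlus_sub, rPlus_comm]; rfl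

lemma Iop_eq_negrMinus (r : P ⊗[K] P) (φ : Module.Dual K P) :
    rMinus (r - TensorProduct.comm K P P r) φ = - Iop r φ := by
  rw [rMinus_sub, rMinus_comm]; unfold Iop; rw [neg_sub]

lemma Iop_skew (r : P ⊗[K] P) (φ ψ : Module.Dual K P) :
    ψ (Iop r φ) = - φ (Iop r ψ) := by
  rw [← Iop_eq_rPlus r φ, rPlus_pair, Iop_eq_negrMinus, map_neg]

lemma Iop_invA (mul cir : P →ₗ[K] P →ₗ[K] P) (r : P ⊗[K] P)
    (hinv : LRinv mul cir (r - TensorProduct.comm K P P r)) (x : P) (φ : Module.Dual K P) :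
    Iop r (φ ∘ₗ mul x) = mul x (Iop r φ) + mul (Iop r φ) x := by
  have h := hinv.1 x
  rw [LinearMap.sub_apply, sub_eq_zero] at h
  have h2 := congrArg (fun s => rPlus s φ) h
  simp only [rPlus_map, LinearMap.id_coe, id_eq, LinearMap.comp_id,
    LinearMap.add_apply, LinearMap.flip_apply, Iop_eq_rPlus] at h2
  exact h2

lemma Iop_invB (mul cir : P →ₗ[K] P →ₗ[K] P) (r : P ⊗[K] P)
    (hinv : LRinv mul cir (r - TensorProduct.comm K P P r)) (x : P) (φ : Module.Dual K P) :
    Iop r (φ ∘ₗ cir x) = cir (Iop r φ) x - cir x (Iop r φ) := by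
  have h := hinv.2 x
  rw [LinearMap.add_apply, add_eq_zero_iff_eq_neg] at h
  have h2 := congrArg (fun s => rPlus s φ) h
  simp only [rPlus_neg, rPlus_map, LinearMap.id_coe, id_eq, LinearMap.comp_id,
    LinearMap.sub_apply, LinearMap.flip_apply, Iop_eq_rPlus] at h2
  rw [h2, neg_sub]

lemma keyS (mul cir : P →ₗ[K] P →ₗ[K] P) (r : P ⊗[K] P)
    (hinv : LRinv mul cir (r - TensorProduct.comm K P P r)) (φ χ : Module.Dual K P) (y : P) :
    φ (mul y (Iop r χ)) = - χ (mul y (Iop r φ)) - χ (mul (Iop r φ) y) := by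
  have h0 : φ (mul y (Iop r χ)) = (φ ∘ₗ mul y) (Iop r χ) := rfl
  rw [h0, Iop_skew r χ (φ ∘ₗ mul y), Iop_invA mul cir r hinv y φ, map_add]
  ring

lemma keyC (mul cir : P →ₗ[K] P →ₗ[K] P) (r : P ⊗[K] P)
    (hinv : LRinv mul cir (r - TensorProduct.comm K P P r)) (φ χ : Module.Dual K P) (y : P) :
    φ (cir y (Iop r χ)) = χ (cir y (Iop r φ)) - χ (cir (Iop r φ) y) := by
  have h0 : φ (cir y (Iop r χ)) = (φ ∘ₗ cir y) (Iop r χ) := rfl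
  rw [h0, Iop_skew r χ (φ ∘ₗ cir y), Iop_invB mul cir r hinv y φ, map_sub]
  ring

lemma keySc (mul cir : P →ₗ[K] P →ₗ[K] P) (r : P ⊗[K] P)
    (hinv : LRinv mul cir (r - TensorProduct.comm K P P r)) (x : P)
    (φ χ : Module.Dual K P) (y : P) :
    φ (mul x (cir y (Iop r χ)))
      = χ (cir y (mul x (Iop r φ))) + χ (cir y (mul (Iop r φ) x))
        - χ (cir (mul x (Iop r φ)) y) - χ (cir (mul (Iop r φ) x) y) := by
  have h0 : φ (mul x (cir y (Iop r χ))) = (φ ∘ₗ mul x) (cir y (Iop r χ)) := rfl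
  rw [h0, keyC mul cir r hinv (φ ∘ₗ mul x) χ y, Iop_invA mul cir r hinv x φ]
  simp only [map_add, LinearMap.add_apply]
  ring

lemma keyCs (mul cir : P →ₗ[K] P →ₗ[K] P) (r : P ⊗[K] P)
    (hinv : LRinv mul cir (r - TensorProduct.comm K P P r)) (x : P)
    (φ χ : Module.Dual K P) (y : P) :
    φ (cir x (mul y (Iop r χ)))
      = - χ (mul y (cir (Iop r φ) x)) + χ (mul y (cir x (Iop r φ)))
        - χ (mul (cir (Iop r φ) x) y) + χ (mul (cir x (Iop r φ)) y) := by
  have h0 : φ (cir x (mul y (Iop r χ))) = (φ ∘ₗ cir x) (mul y (Iop r χ)) := rfl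
  rw [h0, keyS mul cir r hinv (φ ∘ₗ cir x) χ y, Iop_invB mul cir r hinv x φ]
  simp only [map_sub, LinearMap.sub_apply]
  ring

lemma keyCc (mul cir : P →ₗ[K] P →ₗ[K] P) (r : P ⊗[K] P)
    (hinv : LRinv mul cir (r - TensorProduct.comm K P P r)) (x : P)
    (φ χ : Module.Dual K P) (y : P) :
    φ (cir x (cir y (Iop r χ)))
      = χ (cir y (cir (Iop r φ) x)) - χ (cir y (cir x (Iop r φ)))
        - χ (cir (cir (Iop r φ) x) y) + χ (cir (cir x (Iop r φ)) y) := by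
  have h0 : φ (cir x (cir y (Iop r χ))) = (φ ∘ₗ cir x) (cir y (Iop r χ)) := rfl
  rw [h0, keyC mul cir r hinv (φ ∘ₗ cir x) χ y, Iop_invB mul cir r hinv x φ]
  simp only [map_sub, LinearMap.sub_apply]
  ring

lemma sApp (mul : P →ₗ[K] P →ₗ[K] P) (r : P ⊗[K] P) (φ ψ : Module.Dual K P) (z : P) :
    sPlusOp mul r φ ψ z = φ (mul z (Iop r ψ)) := by
  simp [sPlusOp, Iop]

lemma cApp (cir : P →ₗ[K] P →ₗ[K] P) (r : P ⊗[K] P) (φ ψ : Module.Dual K P) (z : P) :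
    cPlusOp cir r φ ψ z = - φ (cir z (Iop r ψ)) := by
  simp [cPlusOp, Iop]

/-- If the skew-symmetric part of `r` is `(L,R)`-invariant, then
`(P*, ∗₊, ∘₊)` is a pre-Poisson algebra. -/
theorem dual_prePoisson_of_LRinvariant
    [FiniteDimensional K P]
    (mul cir : P →ₗ[K] P →ₗ[K] P)
    (hZin : ∀ x y z : P, mul x (mul y z) = mul (mul x y + mul y x) z)
    (hPre : ∀ x y z : P,
      cir (cir x y) z - cir x (cir y z) = cir (cir y x) z - cir y (cir x z))
    (hC1 : ∀ x y z : P,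
      mul (cir x y - cir y x) z = cir x (mul y z) - mul y (cir x z))
    (hC2 : ∀ x y z : P,
      cir (mul x y + mul y x) z = mul x (cir y z) + mul y (cir x z))
    (r : P ⊗[K] P)
    (hinv : LRinv mul cir (r - TensorProduct.comm K P P r)) :
    (∀ ξ η ζ : Module.Dual K P,
      sPlusOp mul r ξ (sPlusOp mul r η ζ)
        = sPlusOp mul r (sPlusOp mul r ξ η + sPlusOp mul r η ξ) ζ) ∧
    (∀ ξ η ζ : Module.Dual K P,
      cPlusOp cir r (cPlusOp cir r ξ η) ζ - cPlusOp cir r ξ (cPlusOp cir r η ζ)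
        = cPlusOp cir r (cPlusOp cir r η ξ) ζ - cPlusOp cir r η (cPlusOp cir r ξ ζ)) ∧
    (∀ ξ η ζ : Module.Dual K P,
      sPlusOp mul r (cPlusOp cir r ξ η - cPlusOp cir r η ξ) ζ
        = cPlusOp cir r ξ (sPlusOp mul r η ζ) - sPlusOp mul r η (cPlusOp cir r ξ ζ)) ∧
    (∀ ξ η ζ : Module.Dual K P,
      cPlusOp cir r (sPlusOp mul r ξ η + sPlusOp mul r η ξ) ζ
        = sPlusOp mul r ξ (cPlusOp cir r η ζ) + sPlusOp mul r η (cPlusOp cir r ξ ζ)) := by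
  refine ⟨fun ξ η ζ => ?_, fun ξ η ζ => ?_, fun ξ η ζ => ?_, fun ξ η ζ => ?_⟩
  · -- Zinbiel identity
    apply LinearMap.ext; intro y
    have h1 := keyS mul cir r hinv ξ (sPlusOp mul r η ζ) y
    have h2 := keyS mul cir r hinv ξ η (mul y (Iop r ζ))
    have h3 := congrArg η (hZin (Iop r ξ) y (Iop r ζ))
    simp only [sApp] at h1 h2
    simp only [map_add, LinearMap.add_apply] at h3
    simp only [sApp, LinearMap.add_apply]
    linear_combination h1 - h2 + h3
  · -- pre-Lie identity
    apply LinearMap.ext; intro y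
    have r1 := keyC mul cir r hinv ξ η (cir y (Iop r ζ))
    have r2 := keyC mul cir r hinv ξ (cPlusOp cir r η ζ) y
    have r3 := keyC mul cir r hinv η (cPlusOp cir r ξ ζ) y
    have r4 := keyCc mul cir r hinv (Iop r ξ) η ζ y
    have r5 := keyC mul cir r hinv η ζ (cir y (Iop r ξ))
    have r6 := keyC mul cir r hinv η ζ (cir (Iop r ξ) y)
    have r7 := keyC mul cir r hinv ξ ζ (cir y (Iop r η))
    have r8 := keyC mul cir r hinv ξ ζ (cir (Iop r η) y)
    have q1 := congrArg ζ (hPre (Iop r ξ) (Iop r η) y)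
    have q2 := congrArg ζ (hPre (Iop r ξ) y (Iop r η))
    have q3 := congrArg ζ (hPre (Iop r η) y (Iop r ξ))
    simp only [cApp] at r2 r3
    simp only [map_sub] at q1 q2 q3
    simp only [cApp, LinearMap.sub_apply]
    linear_combination r1 + r2 - r3 - r4 - r5 + r6 + r7 - r8 - q1 + q2 - q3
  · -- first compatibility
    apply LinearMap.ext; intro y
    have s1 := keyC mul cir r hinv ξ η (mul y (Iop r ζ))
    have s2 := keyC mul cir r hinv ξ (sPlusOp mul r η ζ) y
    have s3 := keyS mul cir r hinv η (cPlusOp cir r ξ ζ) y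
    have s4 := keyCs mul cir r hinv (Iop r ξ) η ζ y
    have s5 := keyS mul cir r hinv η ζ (cir y (Iop r ξ))
    have s6 := keyS mul cir r hinv η ζ (cir (Iop r ξ) y)
    have s7 := keyC mul cir r hinv ξ ζ (mul y (Iop r η))
    have s8 := keyC mul cir r hinv ξ ζ (mul (Iop r η) y)
    have q1 := congrArg ζ (hC1 (Iop r ξ) (Iop r η) y)
    have q2 := congrArg ζ (hC1 (Iop r ξ) y (Iop r η))
    have q3 := congrArg ζ (hC2 (Iop r η) y (Iop r ξ))
    simp only [sApp] at s2
    simp only [cApp] at s3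
    simp only [map_sub, map_add, LinearMap.sub_apply, LinearMap.add_apply] at q1 q2 q3
    simp only [sApp, cApp, LinearMap.sub_apply]
    linear_combination -s1 + s2 + s3 + s4 + s5 - s6 + s7 + s8 + q1 + q2 + q3
  · -- second compatibility
    apply LinearMap.ext; intro y
    have p1 := keyS mul cir r hinv ξ η (cir y (Iop r ζ))
    have p2 := keyS mul cir r hinv ξ (cPlusOp cir r η ζ) y
    have p3 := keyS mul cir r hinv η (cPlusOp cir r ξ ζ) y
    have p4 := keyC mul cir r hinv η ζ (mul y (Iop r ξ))
    have p5 := keyC mul cir r hinv η ζ (mul (Iop r ξ) y)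
    have p6 := keyC mul cir r hinv ξ ζ (mul y (Iop r η))
    have p7 := keyC mul cir r hinv ξ ζ (mul (Iop r η) y)
    have p8 := keySc mul cir r hinv (Iop r ξ) η ζ y
    have w1 := congrArg ζ (hC1 (Iop r ξ) (Iop r η) y)
    have w2 := congrArg ζ (hC2 (Iop r ξ) (Iop r η) y)
    have w3 := congrArg ζ (hC1 (Iop r ξ) y (Iop r η))
    have w4 := congrArg ζ (hC2 (Iop r ξ) y (Iop r η))
    have w5 := congrArg ζ (hC1 (Iop r η) (Iop r ξ) y)
    have w6 := congrArg ζ (hC1 (Iop r η) y (Iop r ξ))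
    have w7 := congrArg ζ (hC2 (Iop r η) y (Iop r ξ))
    have w8 := congrArg ζ (hC1 y (Iop r ξ) (Iop r η))
    have w9 := congrArg ζ (hC1 y (Iop r η) (Iop r ξ))
    simp only [cApp] at p2 p3
    simp only [map_sub, map_add, LinearMap.sub_apply, LinearMap.add_apply]
      at w1 w2 w3 w4 w5 w6 w7 w8 w9
    simp only [sApp, cApp, LinearMap.add_apply]
    linear_combination -p1 - p2 - p3 - p4 - p5 - p6 - p7 + p8
      - w1 - w2 - w3 - w4 - w5 - w6 - w7 - w8 - w9

end
end

section
/- Let (P,·,{·,·}) be a Poisson algebra over a field K with symplectic structure ω, λ ∈ K, and B: P → P a linear map satisfying B(x)·B(y) = B(B(x)·y + x·B(y) + λx·y), {B(x),B(y)} = B({B(x),y} + {x,B(y)} + λ{x,y}), and ω(Bx, y) + ω(x, By) + λω(x,y) = 0 for all x,y (a Rota-Baxter symplectic Poisson algebra of weight λ). Let ∗ and ∘ be the bilinear operations on P determined by ω(x∗y, z) = ω(y, x·z) and ω(x∘y, z) = −ω(y, {x,z}). Then B is a Rota-Baxter operator of weight λ on the pre-Poisson algebra (P,∗,∘), and ω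 satisfies ω(x∗y, z) = ω(y, x∗z + z∗x) and ω(x∘y, z) = −ω(y, x∘z − z∘x); hence (P,∗,∘,B,ω) is a quadratic Rota-Baxter pre-Poisson algebra of weight λ. -/
/-- A Rota–Baxter symplectic Poisson algebra of weight `λ` gives
a quadratic Rota–Baxter pre-Poisson algebra of weight `λ` via the operations
determined by the symplectic form. -/
theorem quadratic_prePoisson_of_rotaBaxter_symplectic
    {K : Type*} [Field K] {P : Type*} [AddCommGroup P] [Module K P]
    (lam : K)
    (pmul pbr : P →ₗ[K] P →ₗ[K] P)
    (hcomm : ∀ x y : P, pmul x y = pmul y x)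
    (hassoc : ∀ x y z : P, pmul (pmul x y) z = pmul x (pmul y z))
    (halt : ∀ x : P, pbr x x = 0)
    (hjac : ∀ x y z : P, pbr x (pbr y z) + pbr y (pbr z x) + pbr z (pbr x y) = 0)
    (hleib : ∀ x y z : P, pbr x (pmul y z) = pmul (pbr x y) z + pmul y (pbr x z))
    (ω : P →ₗ[K] P →ₗ[K] K)
    (hωalt : ∀ x : P, ω x x = 0)
    (hωnd : ∀ x : P, (∀ y : P, ω x y = 0) → x = 0)
    (hωcyc1 : ∀ x y z : P, ω (pbr x y) z + ω (pbr y z) x + ω (pbr z x) y = 0)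
    (hωcyc2 : ∀ x y z : P, ω (pmul x y) z + ω (pmul y z) x + ω (pmul z x) y = 0)
    (B : P →ₗ[K] P)
    (hB1 : ∀ x y : P,
      pmul (B x) (B y) = B (pmul (B x) y + pmul x (B y) + lam • pmul x y))
    (hB2 : ∀ x y : P,
      pbr (B x) (B y) = B (pbr (B x) y + pbr x (B y) + lam • pbr x y))
    (hcomp : ∀ x y : P, ω (B x) y + ω x (B y) + lam * ω x y = 0)
    (smul scir : P →ₗ[K] P →ₗ[K] P)
    (hs : ∀ x y z : P, ω (smul x y) z = ω y (pmul x z))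
    (hc : ∀ x y z : P, ω (scir x y) z = - ω y (pbr x z)) :
    -- (P, ∗, ∘) is a pre-Poisson algebra
    (∀ x y z : P, smul x (smul y z) = smul (smul x y + smul y x) z) ∧
    (∀ x y z : P,
      scir (scir x y) z - scir x (scir y z)
        = scir (scir y x) z - scir y (scir x z)) ∧
    (∀ x y z : P,
      smul (scir x y - scir y x) z = scir x (smul y z) - smul y (scir x z)) ∧
    (∀ x y z : P,
      scir (smul x y + smul y x) z = smul x (scir y z) + smul y (scir x z)) ∧
    -- B is a Rota–Baxter operator of weight λ on (P, ∗, ∘)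
    (∀ x y : P,
      smul (B x) (B y) = B (smul (B x) y + smul x (B y) + lam • smul x y)) ∧
    (∀ x y : P,
      scir (B x) (B y) = B (scir (B x) y + scir x (B y) + lam • scir x y)) ∧
    -- ω satisfies the quadratic invariance conditions
    (∀ x y z : P, ω (smul x y) z = ω y (smul x z + smul z x)) ∧
    (∀ x y z : P, ω (scir x y) z = - ω y (scir x z - scir z x)) := by
  -- skew-symmetry of ω
  have hsk : ∀ x y : P, ω x y = - ω y x := by
    intro x y
    have h := hωalt (x + y)
    simp only [map_add, LinearMap.add_apply, hωalt, zero_add, add_zero] at h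
    linear_combination h
  -- skew-symmetry of the bracket
  have hpsk : ∀ x y : P, pbr x y = - pbr y x := by
    intro x y
    have h := halt (x + y)
    simp only [map_add, LinearMap.add_apply, halt, zero_add, add_zero] at h
    exact eq_neg_of_add_eq_zero_right h
  -- nondegeneracy, as an extensionality principle
  have eqω : ∀ a b : P, (∀ z : P, ω a z = ω b z) → a = b := by
    intro a b h
    have h0 : ∀ z : P, ω (a - b) z = 0 := by
      intro z
      rw [map_sub, LinearMap.sub_apply, h z, sub_self]
    exact sub_eq_zero.mp (hωnd _ h0)
  -- the sub-adjacent identities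
  have hM : ∀ x y : P, smul x y + smul y x = pmul x y := by
    intro x y
    apply eqω
    intro z
    rw [map_add, LinearMap.add_apply, hs, hs]
    have h1 := hωcyc2 x z y
    rw [hcomm z y, hcomm y x] at h1
    linear_combination hsk y (pmul x z) + hsk x (pmul y z) - h1
  have hC : ∀ x y : P, scir x y - scir y x = pbr x y := by
    intro x y
    apply eqω
    intro z
    rw [map_sub, LinearMap.sub_apply, hc, hc]
    have h1 := hωcyc1 x z y
    rw [hpsk z y, hpsk y x] at h1
    simp only [map_neg, LinearMap.neg_apply] at h1
    linear_combination h1 - hsk y (pbr x z) + hsk x (pbr y z)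
  -- Leibniz in the first slot
  have E4 : ∀ x y w : P, pbr (pmul x y) w = pbr y (pmul x w) + pbr x (pmul y w) := by
    intro x y w
    rw [hleib y x w, hleib x y w, hpsk (pmul x y) w, hleib w x y,
        hpsk w x, hpsk w y, hpsk y x]
    simp only [map_neg, LinearMap.neg_apply]
    rw [hcomm (pbr x w) y]
    abel
  -- the pre-Lie key identity
  have key2 : ∀ x y z : P, scir (pbr x y) z
      = scir x (scir y z) - scir y (scir x z) := by
    intro x y z
    apply eqω
    intro w
    rw [map_sub, LinearMap.sub_apply]
    simp only [hc]
    have h := congrArg (fun t => ω z t) (hjac x y w)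
    simp only [map_add, map_zero] at h
    have e1 := congrArg (fun t => ω z (pbr y t)) (hpsk w x)
    have e2 := congrArg (fun t => ω z t) (hpsk w (pbr x y))
    simp only [map_neg, LinearMap.neg_apply] at e1 e2
    linear_combination h - e1 - e2
  refine ⟨?_, ?_, ?_, ?_, ?_, ?_, ?_, ?_⟩
  · -- Zinbiel
    intro x y z
    apply eqω
    intro w
    rw [hM, hs, hs, hs, ← hassoc y x w, hcomm y x]
  · -- pre-Lie
    intro x y z
    have h := key2 x y z
    rw [← hC x y, map_sub, LinearMap.sub_apply] at h
    rw [sub_eq_sub_iff_sub_eq_sub]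
    exact h
  · -- compatibility 1
    intro x y z
    rw [hC x y]
    apply eqω
    intro w
    rw [map_sub, LinearMap.sub_apply]
    simp only [hs, hc]
    have h := congrArg (fun t => ω z t) (hleib x y w)
    simp only [map_add] at h
    linear_combination -h
  · -- compatibility 2
    intro x y z
    rw [hM x y]
    apply eqω
    intro w
    rw [map_add, LinearMap.add_apply]
    simp only [hs, hc]
    rw [E4 x y w]
    simp only [map_add]
    ring
  · -- Rota-Baxter for smul
    intro x y
    apply eqω
    intro z
    have h1 := hcomp (smul (B x) y + smul x (B y) + lam • smul x y) z
    have h3 := hcomp y (pmul (B x) z + pmul x (B z) + lam • pmul x z)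
    rw [hs]
    simp only [map_add, map_smul, LinearMap.add_apply, LinearMap.smul_apply,
      smul_eq_mul, hs] at h1 h3 ⊢
    rw [hB1 x z] at h1
    simp only [map_add, map_smul, LinearMap.add_apply, LinearMap.smul_apply,
      smul_eq_mul] at h1
    linear_combination h3 - h1
  · -- Rota-Baxter for scir
    intro x y
    apply eqω
    intro z
    have h1 := hcomp (scir (B x) y + scir x (B y) + lam • scir x y) z
    have h3 := hcomp y (pbr (B x) z + pbr x (B z) + lam • pbr x z)
    rw [hc]
    simp only [map_add, map_smul, LinearMap.add_apply, LinearMap.smul_apply,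
      smul_eq_mul, hc] at h1 h3 ⊢
    rw [hB2 x z] at h1
    simp only [map_add, map_smul, LinearMap.add_apply, LinearMap.smul_apply,
      smul_eq_mul] at h1
    linear_combination -h1 - h3
  · -- quadratic invariance 1
    intro x y z
    rw [hs, hM]
  · -- quadratic invariance 2
    intro x y z
    rw [hc, hC]
end

section
/- Let (P,∗,∘) be a pre-Poisson algebra over a field K, λ ∈ K, and B: P → P a Rota-Baxter operator of weight λ. Define x∗_By := B(x)∗y + x∗B(y) + λx∗y and x∘_By := B(x)∘y + x∘B(y) + λx∘y. Then (P, ∗_B, ∘_B) is a pre-Poisson algebra (the descendent pre-Poisson algebra), and B is a homomorphism of pre-Poisson algebras from (P, ∗_B, ∘_B) to (P,∗,∘): B(x∗_By) = B(x)∗B(y) and B(x∘_By) = B(x)∘B(y) for all x,y ∈ P. -/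
/-- The descendent operations of a Rota–Baxter operator of weight
`λ` form a pre-Poisson algebra, and `B` is a homomorphism from the descendent
pre-Poisson algebra to the original one. -/
theorem descendent_prePoisson
    {K : Type*} [Field K] {P : Type*} [AddCommGroup P] [Module K P]
    (lam : K)
    (mul cir : P →ₗ[K] P →ₗ[K] P)
    (hZin : ∀ x y z : P, mul x (mul y z) = mul (mul x y + mul y x) z)
    (hPre : ∀ x y z : P,
      cir (cir x y) z - cir x (cir y z) = cir (cir y x) z - cir y (cir x z))
    (hC1 : ∀ x y z : P,
      mul (cir x y - cir y x) z = cir x (mul y z) - mul y (cir x z))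
    (hC2 : ∀ x y z : P,
      cir (mul x y + mul y x) z = mul x (cir y z) + mul y (cir x z))
    (B : P →ₗ[K] P)
    (hB1 : ∀ x y : P,
      mul (B x) (B y) = B (mul (B x) y + mul x (B y) + lam • mul x y))
    (hB2 : ∀ x y : P,
      cir (B x) (B y) = B (cir (B x) y + cir x (B y) + lam • cir x y)) :
    ∀ s c : P → P → P,
      (∀ x y : P, s x y = mul (B x) y + mul x (B y) + lam • mul x y) →
      (∀ x y : P, c x y = cir (B x) y + cir x (B y) + lam • cir x y) →
      (∀ x y z : P, s x (s y z) = s (s x y + s y x) z) ∧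
      (∀ x y z : P, c (c x y) z - c x (c y z) = c (c y x) z - c y (c x z)) ∧
      (∀ x y z : P, s (c x y - c y x) z = c x (s y z) - s y (c x z)) ∧
      (∀ x y z : P, c (s x y + s y x) z = s x (c y z) + s y (c x z)) ∧
      (∀ x y : P, B (s x y) = mul (B x) (B y)) ∧
      (∀ x y : P, B (c x y) = cir (B x) (B y)) := by
  intro s c hs hc
  have hBs : ∀ x y : P, B (s x y) = mul (B x) (B y) := fun x y => by
    rw [hs]; exact (hB1 x y).symm
  have hBc : ∀ x y : P, B (c x y) = cir (B x) (B y) := fun x y => by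
    rw [hc]; exact (hB2 x y).symm
  have hZ : ∀ x y z : P, mul x (mul y z) = mul (mul x y) z + mul (mul y x) z :=
    fun x y z => by rw [hZin x y z, map_add, LinearMap.add_apply]
  have hD1 : ∀ x y z : P,
      mul (cir x y) z - mul (cir y x) z = cir x (mul y z) - mul y (cir x z) :=
    fun x y z => by rw [← hC1 x y z, map_sub, LinearMap.sub_apply]
  have hD2 : ∀ x y z : P,
      cir (mul x y) z + cir (mul y x) z = mul x (cir y z) + mul y (cir x z) :=
    fun x y z => by rw [← hC2 x y z, map_add, LinearMap.add_apply]
  refine ⟨?_, ?_, ?_, ?_, hBs, hBc⟩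
  · intro x y z
    rw [hs x (s y z), hs (s x y + s y x) z, map_add B, hBs, hBs, hBs,
      hs y z, hs x y, hs y x]
    simp only [map_add, map_sub, map_smul, LinearMap.add_apply,
      LinearMap.sub_apply, LinearMap.smul_apply, smul_add, smul_sub, smul_smul]
    linear_combination (norm := module) hZ (B x) (B y) z + hZ (B x) y (B z) +
      hZ x (B y) (B z) + lam • hZ x y (B z) + lam • hZ (B x) y z +
      lam • hZ x (B y) z + (lam * lam) • hZ x y z
  · intro x y z
    rw [hc (c x y) z, hc x (c y z), hc (c y x) z, hc y (c x z),
      hBc x y, hBc y z, hBc y x, hBc x z, hc x y, hc y z, hc y x, hc x z]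
    simp only [map_add, map_sub, map_smul, LinearMap.add_apply,
      LinearMap.sub_apply, LinearMap.smul_apply, smul_add, smul_sub, smul_smul]
    linear_combination (norm := module) hPre (B x) (B y) z + hPre (B x) y (B z) +
      hPre x (B y) (B z) + lam • hPre x y (B z) + lam • hPre (B x) y z +
      lam • hPre x (B y) z + (lam * lam) • hPre x y z
  · intro x y z
    rw [hs (c x y - c y x) z, hc x (s y z), hs y (c x z), map_sub B,
      hBc x y, hBc y x, hBs y z, hBc x z, hc x y, hc y x, hs y z, hc x z]
    simp only [map_add, map_sub, map_smul, LinearMap.add_apply,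
      LinearMap.sub_apply, LinearMap.smul_apply, smul_add, smul_sub, smul_smul]
    linear_combination (norm := module) hD1 (B x) (B y) z + hD1 (B x) y (B z) +
      hD1 x (B y) (B z) + lam • hD1 x y (B z) + lam • hD1 (B x) y z +
      lam • hD1 x (B y) z + (lam * lam) • hD1 x y z
  · intro x y z
    rw [hc (s x y + s y x) z, hs x (c y z), hs y (c x z), map_add B,
      hBs x y, hBs y x, hBc y z, hBc x z, hs x y, hs y x, hc y z, hc x z]
    simp only [map_add, map_sub, map_smul, LinearMap.add_apply,
      LinearMap.sub_apply, LinearMap.smul_apply, smul_add, smul_sub, smul_smul]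
    linear_combination (norm := module) hD2 (B x) (B y) z + hD2 (B x) y (B z) +
      hD2 x (B y) (B z) + lam • hD2 x y (B z) + lam • hD2 (B x) y z +
      lam • hD2 x (B y) z + (lam * lam) • hD2 x y z
end
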